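/- arXiv:2003.09266 — 9 statements merged into one kernel-verified Lean document; each statement's English description precedes it below -/
import Mathlib

section
/- Let P_1, ..., P_d be finite point sets in R^d and let y_1 ∈ conv(P_1), ..., y_d ∈ conv(P_d) be points, one from each convex hull. If the affine hull of {y_1, ..., y_d} has dimension at most d−2, then there exists a partition of [d] into two nonempty disjoint index sets I and J such that conv(⋃_{i∈I} P_i) ∩ conv(⋃_{j∈J} P_j) ≠ ∅. -/
open Set

theorem radon_partition_of_degenerate_colorful_selection
    {d : ℕ} (P : Fin d → Finset (EuclideanSpace ℝ (Fin d)))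
    (y : Fin d → EuclideanSpace ℝ (Fin d))
    (hy : ∀ i, y i ∈ convexHull ℝ (P i : Set (EuclideanSpace ℝ (Fin d))))
    (hdim : (Module.finrank ℝ (affineSpan ℝ (Set.range y)).direction : ℤ) ≤ (d : ℤ) - 2) :
    ∃ I : Finset (Fin d), I.Nonempty ∧ Iᶜ.Nonempty ∧
      (convexHull ℝ (⋃ i ∈ I, (P i : Set (EuclideanSpace ℝ (Fin d)))) ∩
        convexHull ℝ (⋃ i ∈ Iᶜ, (P i : Set (EuclideanSpace ℝ (Fin d))))).Nonempty := by
  classical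
  have hd : ¬ AffineIndependent ℝ y := by
    intro h
    rcases Nat.eq_zero_or_pos d with h0 | h1
    · subst h0; omega
    · have hc : Fintype.card (Fin d) = (d - 1) + 1 := by simp; omega
      have hfr := h.finrank_vectorSpan hc
      rw [direction_affineSpan, hfr] at hdim
      omega
  obtain ⟨I, hI⟩ := Convex.radon_partition hd
  obtain ⟨x, hx1, hx2⟩ := hI
  have hIne : I.Nonempty := by
    rcases I.eq_empty_or_nonempty with rfl | h
    · simp [convexHull_empty] at hx1
    · exact h
  have hIcne : Iᶜ.Nonempty := by
    rcases Iᶜ.eq_empty_or_nonempty with he | h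
    · rw [he] at hx2; simp [convexHull_empty] at hx2
    · exact h
  have key : ∀ (S : Set (Fin d)), convexHull ℝ (y '' S) ⊆
      convexHull ℝ (⋃ i ∈ S, (P i : Set (EuclideanSpace ℝ (Fin d)))) := by
    intro S
    apply convexHull_min _ (convex_convexHull ℝ _)
    rintro _ ⟨i, hi, rfl⟩
    exact convexHull_mono (Set.subset_biUnion_of_mem hi) (hy i)
  refine ⟨I.toFinset, ?_, ?_, x, ?_, ?_⟩
  · exact Set.toFinset_nonempty.mpr hIne
  · rw [← Set.toFinset_compl]
    exact Set.toFinset_nonempty.mpr hIcne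
  · have : (⋃ i ∈ I.toFinset, (P i : Set (EuclideanSpace ℝ (Fin d)))) =
        ⋃ i ∈ I, (P i : Set (EuclideanSpace ℝ (Fin d))) := by
      simp [Set.mem_toFinset]
    rw [this]; exact key I hx1
  · have : (⋃ i ∈ I.toFinsetᶜ, (P i : Set (EuclideanSpace ℝ (Fin d)))) =
        ⋃ i ∈ Iᶜ, (P i : Set (EuclideanSpace ℝ (Fin d))) := by
      simp [Set.mem_toFinset]
    rw [this]; exact key Iᶜ hx2
end

section
/- Let P_1, ..., P_d be finite point sets in R^d and suppose I, J is a partition of [d] into nonempty disjoint sets with conv(⋃_{i∈I} P_i) ∩ conv(⋃_{j∈J} P_j) ≠ ∅. Then there exist points x_1 ∈ conv(P_1), ..., x_d ∈ conv(P_d) whose affine hull has dimension at most d−2. -/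
open Set

/-- From membership in the convex hull of a union of finitely many convex hulls,
extract a colorful selection whose convex hull (over the index set) contains the point. -/
lemma aux_colorful_selection {d : ℕ} (P : Fin d → Finset (EuclideanSpace ℝ (Fin d)))
    (hne : ∀ i, (P i).Nonempty) (I : Finset (Fin d)) {p : EuclideanSpace ℝ (Fin d)}
    (hp : p ∈ convexHull ℝ (⋃ i ∈ I, (P i : Set (EuclideanSpace ℝ (Fin d))))) :
    ∃ x : Fin d → EuclideanSpace ℝ (Fin d),
      (∀ i, x i ∈ convexHull ℝ (P i : Set (EuclideanSpace ℝ (Fin d)))) ∧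
      p ∈ convexHull ℝ (x '' ↑I) := by
  classical
  obtain ⟨ι, _inst, w, z, hw₀, hw₁, hz, hx⟩ := mem_convexHull_iff_exists_fintype.1 hp
  choose c hcI hcz using fun i => Set.mem_iUnion₂.1 (hz i)
  set lam : Fin d → ℝ := fun j => ∑ i ∈ Finset.univ.filter (fun i => c i = j), w i with hlam
  have hlam₀ : ∀ j, 0 ≤ lam j := fun j =>
    Finset.sum_nonneg fun i _ => hw₀ i
  set q : Fin d → EuclideanSpace ℝ (Fin d) := fun j =>
    if 0 < lam j then (Finset.univ.filter (fun i => c i = j)).centerMass w z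
    else (hne j).choose with hq
  have hqmem : ∀ j, q j ∈ convexHull ℝ ((P j : Set (EuclideanSpace ℝ (Fin d)))) := by
    intro j
    rw [hq]
    by_cases h : 0 < lam j
    · simp only [h, if_true]
      refine Finset.centerMass_mem_convexHull _ (fun i _ => hw₀ i) h ?_
      intro i hi
      have : c i = j := (Finset.mem_filter.1 hi).2
      exact this ▸ hcz i
    · simp only [h, if_false]
      exact subset_convexHull ℝ _ (hne j).choose_spec
  have hmul : ∀ j, lam j • q j = ∑ i ∈ Finset.univ.filter (fun i => c i = j), w i • z i := by
    intro j
    by_cases h : 0 < lam j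
    · simp only [hq, h, if_true, Finset.centerMass, ← hlam]
      rw [smul_inv_smul₀ (ne_of_gt h)]
    · have h0 : lam j = 0 := le_antisymm (not_lt.1 h) (hlam₀ j)
      have : ∀ i ∈ Finset.univ.filter (fun i => c i = j), w i = 0 := by
        intro i hi
        exact (Finset.sum_eq_zero_iff_of_nonneg fun i _ => hw₀ i).1 h0 i hi
      rw [h0, zero_smul]
      exact (Finset.sum_eq_zero fun i hi => by rw [this i hi, zero_smul]).symm
  have hsum : ∑ j ∈ I, lam j = 1 := by
    rw [hlam, ← hw₁]
    exact Finset.sum_fiberwise_of_maps_to (fun i _ => hcI i) w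
  have hrep : p = ∑ j ∈ I, lam j • q j := by
    rw [← hx]
    simp only [hmul]
    exact (Finset.sum_fiberwise_of_maps_to (fun i _ => hcI i) (fun i => w i • z i)).symm
  refine ⟨q, hqmem, ?_⟩
  rw [hrep, ← Finset.centerMass_eq_of_sum_1 _ _ hsum]
  exact Finset.centerMass_mem_convexHull _ (fun j _ => hlam₀ j) (hsum ▸ one_pos)
    (fun j hj => Set.mem_image_of_mem q hj)

theorem degenerate_colorful_selection_of_intersecting_partition
    {d : ℕ} (P : Fin d → Finset (EuclideanSpace ℝ (Fin d)))
    (hne : ∀ i, (P i).Nonempty)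
    (I : Finset (Fin d)) (hI : I.Nonempty) (hIc : Iᶜ.Nonempty)
    (hint : (convexHull ℝ (⋃ i ∈ I, (P i : Set (EuclideanSpace ℝ (Fin d)))) ∩
        convexHull ℝ (⋃ i ∈ Iᶜ, (P i : Set (EuclideanSpace ℝ (Fin d))))).Nonempty) :
    ∃ x : Fin d → EuclideanSpace ℝ (Fin d),
      (∀ i, x i ∈ convexHull ℝ (P i : Set (EuclideanSpace ℝ (Fin d)))) ∧
      (Module.finrank ℝ (affineSpan ℝ (Set.range x)).direction : ℤ) ≤ (d : ℤ) - 2 := by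
  classical
  obtain ⟨p, hp1, hp2⟩ := hint
  obtain ⟨y, hy, hpy⟩ := aux_colorful_selection P hne I hp1
  obtain ⟨w, hw, hpw⟩ := aux_colorful_selection P hne Iᶜ hp2
  set x : Fin d → EuclideanSpace ℝ (Fin d) := fun i => if i ∈ I then y i else w i with hxdef
  have hximg : x '' ↑I = y '' ↑I := by
    ext v; constructor <;> rintro ⟨i, hi, rfl⟩ <;>
      exact ⟨i, hi, by simp [hxdef, Finset.mem_coe.1 hi]⟩
  have hximgc : x '' ↑Iᶜ = w '' ↑Iᶜ := by
    ext v; constructor <;> rintro ⟨i, hi, rfl⟩ <;>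
      refine ⟨i, hi, ?_⟩ <;>
      simp [hxdef, Finset.mem_compl.1 (Finset.mem_coe.1 hi)]
  have hrange : Set.range x = x '' ↑I ∪ x '' ↑Iᶜ := by
    rw [← Set.image_union, ← Finset.coe_union, Finset.union_compl, Finset.coe_univ,
      Set.image_univ]
  refine ⟨x, ?_, ?_⟩
  · intro i
    by_cases h : i ∈ I <;> simp [hxdef, h, hy i, hw i]
  · have hpA : p ∈ affineSpan ℝ (x '' ↑I) := by
      rw [hximg]; exact convexHull_subset_affineSpan _ hpy
    have hpB : p ∈ affineSpan ℝ (x '' ↑Iᶜ) := by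
      rw [hximgc]; exact convexHull_subset_affineSpan _ hpw
    have hspan : affineSpan ℝ (Set.range x) =
        affineSpan ℝ (x '' ↑I) ⊔ affineSpan ℝ (x '' ↑Iᶜ) := by
      rw [hrange, AffineSubspace.span_union]
    have hdir : (affineSpan ℝ (Set.range x)).direction =
        (affineSpan ℝ (x '' ↑I)).direction ⊔ (affineSpan ℝ (x '' ↑Iᶜ)).direction := by
      rw [hspan, AffineSubspace.direction_sup hpA hpB]
      simp
    -- bound the two directions
    have hcardI : I.card = (I.card - 1) + 1 := (Nat.succ_pred_eq_of_pos hI.card_pos).symm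
    have hcardIc : Iᶜ.card = (Iᶜ.card - 1) + 1 := (Nat.succ_pred_eq_of_pos hIc.card_pos).symm
    have hA : Module.finrank ℝ (affineSpan ℝ (x '' ↑I)).direction ≤ I.card - 1 := by
      rw [direction_affineSpan, ← Finset.coe_image]
      exact finrank_vectorSpan_image_finset_le ℝ x I hcardI
    have hB : Module.finrank ℝ (affineSpan ℝ (x '' ↑Iᶜ)).direction ≤ Iᶜ.card - 1 := by
      rw [direction_affineSpan, ← Finset.coe_image]
      exact finrank_vectorSpan_image_finset_le ℝ x Iᶜ hcardIc
    have hfin : Module.finrank ℝ (affineSpan ℝ (Set.range x)).direction ≤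
        (I.card - 1) + (Iᶜ.card - 1) := by
      rw [hdir]
      exact le_trans (Submodule.finrank_add_le_finrank_add_finrank _ _)
        (add_le_add hA hB)
    have hcard : I.card + Iᶜ.card = d := by
      simp [Finset.card_add_card_compl]
    have h1 : 1 ≤ I.card := hI.card_pos
    have h2 : 1 ≤ Iᶜ.card := hIc.card_pos
    have := hfin
    omega
end

section
/- Finite point sets P_1, ..., P_d in R^d are well-separated (i.e., for every choice of distinct indices i_1, ..., i_k and points y_j ∈ conv(P_{i_j}), the affine hull of {y_1, ..., y_k} has dimension exactly k−1) if and only if for every pair of disjoint nonempty index sets I, J ⊆ [d], the sets conv(⋃_{i∈I} P_i) and conv(⋃_{j∈J} P_j) are disjoint. -/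
open Set

/-- `P` is well-separated: every colorful selection of points, one from the convex hull of
each of `k` distinct color classes, is affinely independent. -/
def WellSeparated {d : ℕ} (P : Fin d → Finset (EuclideanSpace ℝ (Fin d))) : Prop :=
  ∀ (k : ℕ) (ι : Fin k → Fin d), Function.Injective ι →
    ∀ y : Fin k → EuclideanSpace ℝ (Fin d),
      (∀ j, y j ∈ convexHull ℝ (P (ι j) : Set (EuclideanSpace ℝ (Fin d)))) →
      AffineIndependent ℝ y

private lemma sum_over_orderEmb {d : ℕ} {M : Type*} [AddCommMonoid M]
    (K : Finset (Fin d)) (f : Fin d → M) :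
    ∑ j : Fin K.card, f (K.orderEmbOfFin rfl j) = ∑ i ∈ K, f i := by
  refine Finset.sum_bij (fun j _ => K.orderEmbOfFin rfl j)
    (fun j _ => K.orderEmbOfFin_mem rfl j)
    (fun a _ b _ h => (K.orderEmbOfFin rfl).injective h) ?_ (fun _ _ => rfl)
  intro i hi
  have : i ∈ Set.range (K.orderEmbOfFin rfl) := by
    rw [K.range_orderEmbOfFin rfl]; exact hi
  obtain ⟨j, hj⟩ := this
  exact ⟨j, Finset.mem_univ _, hj⟩

/-- Representation lemma: a point of the convex hull of a union of color classes is a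
convex combination of points in the individual convex hulls. -/
private lemma exists_rep {d : ℕ} (P : Fin d → Finset (EuclideanSpace ℝ (Fin d)))
    (I : Finset (Fin d)) (x : EuclideanSpace ℝ (Fin d))
    (hx : x ∈ convexHull ℝ (⋃ i ∈ I, (P i : Set (EuclideanSpace ℝ (Fin d))))) :
    ∃ (w : Fin d → ℝ) (y : Fin d → EuclideanSpace ℝ (Fin d)),
      (∀ i, 0 ≤ w i) ∧
      (∀ i, w i ≠ 0 → i ∈ I ∧ y i ∈ convexHull ℝ (P i : Set (EuclideanSpace ℝ (Fin d)))) ∧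
      ∑ i, w i = 1 ∧ ∑ i, w i • y i = x := by
  classical
  set T : Finset (EuclideanSpace ℝ (Fin d)) := I.biUnion P with hT
  have hUnion : (⋃ i ∈ I, (P i : Set (EuclideanSpace ℝ (Fin d)))) = (T : Set _) := by
    simp [hT, Finset.coe_biUnion]
  rw [hUnion] at hx
  obtain ⟨w0, hw0, hw0sum, hw0x⟩ := Finset.mem_convexHull'.1 hx
  -- nonemptiness of I
  have hI : I.Nonempty := by
    by_contra h
    rw [Finset.not_nonempty_iff_eq_empty] at h
    subst h
    simp [hT] at hx
  obtain ⟨i0, hi0⟩ := hI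
  -- choice of a color for each point
  have hc : ∀ p ∈ T, ∃ i, i ∈ I ∧ p ∈ P i := by
    intro p hp
    simpa using Finset.mem_biUnion.1 hp
  set c : EuclideanSpace ℝ (Fin d) → Fin d := fun p => if h : ∃ i, i ∈ I ∧ p ∈ P i then h.choose else i0 with hcdef
  have hcI : ∀ p ∈ T, c p ∈ I ∧ p ∈ P (c p) := by
    intro p hp
    have h := hc p hp
    simp only [hcdef, dif_pos h]
    exact h.choose_spec
  set w : Fin d → ℝ := fun i => ∑ p ∈ T with c p = i, w0 p with hwdef
  set v : Fin d → EuclideanSpace ℝ (Fin d) := fun i => ∑ p ∈ T with c p = i, w0 p • p with hvdef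
  have hwnn : ∀ i, 0 ≤ w i := fun i =>
    Finset.sum_nonneg fun p hp => hw0 p (Finset.mem_of_mem_filter p hp)
  have hv0 : ∀ i, w i = 0 → v i = 0 := by
    intro i hwi
    apply Finset.sum_eq_zero
    intro p hp
    have := (Finset.sum_eq_zero_iff_of_nonneg
      (fun q hq => hw0 q (Finset.mem_of_mem_filter q hq))).1 hwi p hp
    simp [this]
  set y : Fin d → EuclideanSpace ℝ (Fin d) := fun i => (w i)⁻¹ • v i with hydef
  refine ⟨w, y, hwnn, ?_, ?_, ?_⟩
  · intro i hwi
    have hfib : ∀ p ∈ T.filter (fun p => c p = i), p ∈ (P i : Set (EuclideanSpace ℝ (Fin d))) := by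
      intro p hp
      obtain ⟨hpT, hpc⟩ := Finset.mem_filter.1 hp
      have := (hcI p hpT).2
      rw [hpc] at this
      exact this
    constructor
    · -- i ∈ I : filter is nonempty
      have : (T.filter (fun p => c p = i)).Nonempty := by
        by_contra h
        rw [Finset.not_nonempty_iff_eq_empty] at h
        apply hwi
        simp [hwdef, h]
      obtain ⟨p, hp⟩ := this
      obtain ⟨hpT, hpc⟩ := Finset.mem_filter.1 hp
      rw [← hpc]
      exact (hcI p hpT).1
    · have hpos : 0 < ∑ p ∈ T.filter (fun p => c p = i), w0 p :=
        lt_of_le_of_ne (Finset.sum_nonneg fun q hq => hw0 q (Finset.mem_of_mem_filter q hq))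
          (Ne.symm hwi)
      have := (T.filter (fun p => c p = i)).centerMass_mem_convexHull
        (fun q hq => hw0 q (Finset.mem_of_mem_filter q hq)) hpos hfib
      rw [Finset.centerMass] at this
      exact this
  · rw [hwdef]
    calc ∑ i, ∑ p ∈ T with c p = i, w0 p = ∑ p ∈ T, w0 p :=
          Finset.sum_fiberwise T c w0
      _ = 1 := hw0sum
  · have hwy : ∀ i, w i • y i = v i := by
      intro i
      by_cases h : w i = 0
      · simp [h, hv0 i h]
      · rw [hydef]
        simp only [smul_smul]
        rw [mul_inv_cancel₀ h, one_smul]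
    calc ∑ i, w i • y i = ∑ i, v i := by simp [hwy]
      _ = ∑ p ∈ T, w0 p • p := Finset.sum_fiberwise T c _
      _ = x := hw0x

theorem wellSeparated_iff_disjoint_convexHulls
    {d : ℕ} (P : Fin d → Finset (EuclideanSpace ℝ (Fin d))) :
    WellSeparated P ↔
      ∀ I J : Finset (Fin d), I.Nonempty → J.Nonempty → Disjoint I J →
        Disjoint (convexHull ℝ (⋃ i ∈ I, (P i : Set (EuclideanSpace ℝ (Fin d)))))
          (convexHull ℝ (⋃ j ∈ J, (P j : Set (EuclideanSpace ℝ (Fin d))))) := by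
  classical
  constructor
  · intro hWS I J _ _ hIJ
    rw [Set.disjoint_left]
    intro x hxI hxJ
    obtain ⟨w1, y1, hw1nn, hw1supp, hw1sum, hw1x⟩ := exists_rep P I x hxI
    obtain ⟨w2, y2, hw2nn, hw2supp, hw2sum, hw2x⟩ := exists_rep P J x hxJ
    -- supports are disjoint
    have hdisj : ∀ i, w1 i ≠ 0 → w2 i = 0 := by
      intro i h1
      by_contra h2
      exact (Finset.disjoint_left.1 hIJ (hw1supp i h1).1) (hw2supp i h2).1
    set u : Fin d → ℝ := fun i => w1 i - w2 i with hudef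
    set y : Fin d → EuclideanSpace ℝ (Fin d) := fun i => if w1 i ≠ 0 then y1 i else y2 i
      with hydef
    set K : Finset (Fin d) := Finset.univ.filter (fun i => u i ≠ 0) with hKdef
    set ι : Fin K.card → Fin d := fun j => K.orderEmbOfFin rfl j with hιdef
    have hιinj : Function.Injective ι := (K.orderEmbOfFin rfl).injective
    have hymem : ∀ j, y (ι j) ∈ convexHull ℝ (P (ι j) : Set (EuclideanSpace ℝ (Fin d))) := by
      intro j
      have hK : ι j ∈ K := K.orderEmbOfFin_mem rfl j
      have hu : u (ι j) ≠ 0 := (Finset.mem_filter.1 hK).2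
      by_cases h1 : w1 (ι j) ≠ 0
      · rw [hydef]; simp only []
        rw [if_pos h1]
        exact (hw1supp _ h1).2
      · have h2 : w2 (ι j) ≠ 0 := by
          intro h2
          apply hu
          push_neg at h1
          simp [hudef, h1, h2]
        rw [hydef]; simp only []
        rw [if_neg h1]
        exact (hw2supp _ h2).2
    have hAI := hWS K.card ι hιinj (fun j => y (ι j)) hymem
    -- derive contradiction from the affine dependence u
    have key := affineIndependent_iff.1 hAI Finset.univ (fun j => u (ι j))
    -- compute the two sums
    have husum : ∑ j, u (ι j) = 0 := by
      rw [hιdef, sum_over_orderEmb K u]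
      have : ∑ i ∈ K, u i = ∑ i, u i := by
        apply Finset.sum_subset (Finset.subset_univ K)
        intro i _ hiK
        by_contra h
        exact hiK (Finset.mem_filter.2 ⟨Finset.mem_univ i, h⟩)
      rw [this, hudef]
      simp [Finset.sum_sub_distrib, hw1sum, hw2sum]
    have huvec : ∑ j, u (ι j) • y (ι j) = 0 := by
      rw [hιdef, sum_over_orderEmb K (fun i => u i • y i)]
      have hsub : ∑ i ∈ K, u i • y i = ∑ i, u i • y i := by
        apply Finset.sum_subset (Finset.subset_univ K)
        intro i _ hiK
        have : u i = 0 := by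
          by_contra h
          exact hiK (Finset.mem_filter.2 ⟨Finset.mem_univ i, h⟩)
        simp [this]
      rw [hsub]
      have h1 : ∀ i, w1 i • y i = w1 i • y1 i := by
        intro i
        by_cases h : w1 i = 0
        · simp [h]
        · rw [hydef]; simp [h]
      have h2 : ∀ i, w2 i • y i = w2 i • y2 i := by
        intro i
        by_cases h : w2 i = 0
        · simp [h]
        · have hw1i : w1 i = 0 := by
            by_contra h1'
            exact h (hdisj i h1')
          rw [hydef]; simp [hw1i]
      calc ∑ i, u i • y i = ∑ i, (w1 i • y i - w2 i • y i) := by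
            simp [hudef, sub_smul]
        _ = ∑ i, w1 i • y i - ∑ i, w2 i • y i := Finset.sum_sub_distrib _ _
        _ = ∑ i, w1 i • y1 i - ∑ i, w2 i • y2 i := by simp [h1, h2]
        _ = x - x := by rw [hw1x, hw2x]
        _ = 0 := sub_self x
    have hall := key husum huvec
    -- but u is nonzero somewhere
    have : ∃ i, w1 i ≠ 0 := by
      by_contra h
      push_neg at h
      rw [Finset.sum_eq_zero (fun i _ => h i)] at hw1sum
      exact one_ne_zero hw1sum.symm
    obtain ⟨i, hi⟩ := this
    have hui : u i ≠ 0 := by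
      rw [hudef]
      simp [hdisj i hi, hi]
    have hiK : i ∈ K := Finset.mem_filter.2 ⟨Finset.mem_univ i, hui⟩
    have : i ∈ Set.range (K.orderEmbOfFin rfl) := by
      rw [K.range_orderEmbOfFin rfl]; exact hiK
    obtain ⟨j, hj⟩ := this
    apply hui
    rw [← hj]
    exact hall j (Finset.mem_univ j)
  · intro h k ι hιinj y hy
    rw [affineIndependent_iff]
    intro s w hwsum hwvec
    by_contra hne
    push_neg at hne
    obtain ⟨e0, he0s, he0⟩ := hne
    set A : Finset (Fin k) := s.filter (fun e => 0 < w e) with hAdef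
    set B : Finset (Fin k) := s.filter (fun e => w e < 0) with hBdef
    have hABdisj : Disjoint A B := by
      rw [Finset.disjoint_left]
      intro e heA heB
      exact absurd ((Finset.mem_filter.1 heB).2) (not_lt.2 (le_of_lt (Finset.mem_filter.1 heA).2))
    -- sums relation
    have hsplit : ∀ (f : Fin k → EuclideanSpace ℝ (Fin d)) (g : Fin k → ℝ),
        True := fun _ _ => trivial
    have hsumsplit : ∑ e ∈ A, w e + ∑ e ∈ B, w e = 0 := by
      have h1 : ∑ e ∈ s, w e = ∑ e ∈ A, w e + ∑ e ∈ s.filter (fun e => ¬ 0 < w e), w e :=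
        (Finset.sum_filter_add_sum_filter_not s _ w).symm
      have h2 : ∑ e ∈ s.filter (fun e => ¬ 0 < w e), w e = ∑ e ∈ B, w e := by
        symm
        apply Finset.sum_subset
        · intro e he
          obtain ⟨hes, hee⟩ := Finset.mem_filter.1 he
          exact Finset.mem_filter.2 ⟨hes, not_lt.2 (le_of_lt hee)⟩
        · intro e he heB
          obtain ⟨hes, hee⟩ := Finset.mem_filter.1 he
          have : ¬ w e < 0 := fun hlt => heB (Finset.mem_filter.2 ⟨hes, hlt⟩)
          linarith [not_lt.1 hee, not_lt.1 this]
      rw [h1, h2] at hwsum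
      exact hwsum
    have hvecsplit : ∑ e ∈ A, w e • y e + ∑ e ∈ B, w e • y e = 0 := by
      have h1 : ∑ e ∈ s, w e • y e
          = ∑ e ∈ A, w e • y e + ∑ e ∈ s.filter (fun e => ¬ 0 < w e), w e • y e :=
        (Finset.sum_filter_add_sum_filter_not s _ _).symm
      have h2 : ∑ e ∈ s.filter (fun e => ¬ 0 < w e), w e • y e = ∑ e ∈ B, w e • y e := by
        symm
        apply Finset.sum_subset
        · intro e he
          obtain ⟨hes, hee⟩ := Finset.mem_filter.1 he
          exact Finset.mem_filter.2 ⟨hes, not_lt.2 (le_of_lt hee)⟩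
        · intro e he heB
          obtain ⟨hes, hee⟩ := Finset.mem_filter.1 he
          have hnl : ¬ w e < 0 := fun hlt => heB (Finset.mem_filter.2 ⟨hes, hlt⟩)
          have : w e = 0 := le_antisymm (not_lt.1 hee) (not_lt.1 hnl)
          simp [this]
      rw [h1, h2] at hwvec
      exact hwvec
    -- A nonempty
    have hA : A.Nonempty := by
      by_contra hAe
      rw [Finset.not_nonempty_iff_eq_empty] at hAe
      have hBsum : ∑ e ∈ B, w e = 0 := by
        rw [hAe] at hsumsplit; simpa using hsumsplit
      have hB : B = ∅ := by
        by_contra hBe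
        rw [← Finset.not_nonempty_iff_eq_empty, not_not] at hBe
        have : ∑ e ∈ B, w e < 0 :=
          Finset.sum_neg (fun e he => (Finset.mem_filter.1 he).2) hBe
        linarith
      -- then w e0 = 0, contradiction
      rcases lt_trichotomy (w e0) 0 with h | h | h
      · have : e0 ∈ B := Finset.mem_filter.2 ⟨he0s, h⟩
        rw [hB] at this; exact absurd this (Finset.notMem_empty e0)
      · exact he0 h
      · have : e0 ∈ A := Finset.mem_filter.2 ⟨he0s, h⟩
        rw [hAe] at this; exact absurd this (Finset.notMem_empty e0)
    have hApos : 0 < ∑ e ∈ A, w e :=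
      Finset.sum_pos (fun e he => (Finset.mem_filter.1 he).2) hA
    have hBsum : ∑ e ∈ B, w e = -(∑ e ∈ A, w e) := by linarith
    have hB : B.Nonempty := by
      by_contra hBe
      rw [Finset.not_nonempty_iff_eq_empty] at hBe
      rw [hBe] at hBsum
      simp at hBsum
      linarith
    -- the common point
    set S : ℝ := ∑ e ∈ A, w e with hSdef
    set x : EuclideanSpace ℝ (Fin d) := S⁻¹ • ∑ e ∈ A, w e • y e with hxdef
    set I : Finset (Fin d) := A.image ι with hIdef
    set J : Finset (Fin d) := B.image ι with hJdef
    have hInon : I.Nonempty := hA.image ι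
    have hJnon : J.Nonempty := hB.image ι
    have hIJ : Disjoint I J := by
      rw [hIdef, hJdef, Finset.disjoint_image hιinj]
      exact hABdisj
    have hxI : x ∈ convexHull ℝ (⋃ i ∈ I, (P i : Set (EuclideanSpace ℝ (Fin d)))) := by
      have := (convex_convexHull ℝ (⋃ i ∈ I, (P i : Set (EuclideanSpace ℝ (Fin d))))).centerMass_mem
        (t := A) (z := y) (fun e he => le_of_lt (Finset.mem_filter.1 he).2) hApos ?_
      · rwa [Finset.centerMass] at this
      · intro e he
        have hmemI : ι e ∈ I := by rw [hIdef]; exact Finset.mem_image_of_mem ι he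
        have : (P (ι e) : Set (EuclideanSpace ℝ (Fin d))) ⊆ ⋃ i ∈ I, (P i : Set _) :=
          Set.subset_iUnion₂ (s := fun i (_ : i ∈ I) => (P i : Set (EuclideanSpace ℝ (Fin d)))) (ι e) hmemI
        exact (convexHull_mono this) (hy e)
    have hxJ : x ∈ convexHull ℝ (⋃ j ∈ J, (P j : Set (EuclideanSpace ℝ (Fin d)))) := by
      have hBw : ∀ e ∈ B, 0 ≤ -w e := fun e he =>
        neg_nonneg.2 (le_of_lt (Finset.mem_filter.1 he).2)
      have hBpos : 0 < ∑ e ∈ B, -w e := by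
        rw [Finset.sum_neg_distrib, hBsum]; simpa using hApos
      have hmem := (convex_convexHull ℝ
          (⋃ j ∈ J, (P j : Set (EuclideanSpace ℝ (Fin d))))).centerMass_mem
        (t := B) (z := y) hBw hBpos ?_
      · rw [Finset.centerMass] at hmem
        have heq : (∑ e ∈ B, -w e)⁻¹ • ∑ e ∈ B, (-w e) • y e = x := by
          rw [hxdef]
          congr 1
          · rw [Finset.sum_neg_distrib, hBsum, neg_neg]
          · have : ∑ e ∈ B, (-w e) • y e = -∑ e ∈ B, w e • y e := by
              simp [neg_smul, Finset.sum_neg_distrib]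
            rw [this]
            have := hvecsplit
            linear_combination (norm := module) -this
        rwa [heq] at hmem
      · intro e he
        have hmemJ : ι e ∈ J := by rw [hJdef]; exact Finset.mem_image_of_mem ι he
        have : (P (ι e) : Set (EuclideanSpace ℝ (Fin d))) ⊆ ⋃ j ∈ J, (P j : Set _) :=
          Set.subset_iUnion₂ (s := fun j (_ : j ∈ J) => (P j : Set (EuclideanSpace ℝ (Fin d)))) (ι e) hmemJ
        exact (convexHull_mono this) (hy e)
    exact Set.disjoint_left.1 (h I J hInon hJnon hIJ) hxI hxJ
end

section
/- Let H_p and H_q be two hyperplanes in R^d such that R = H_p ∩ H_q is a (d−2)-flat, and let K ⊂ R^d be a convex set intersecting both H_p and H_q but disjoint from R. Suppose p ∈ K ∩ H_p and q ∈ K ∩ H_q, and suppose |K' ∩ H_p^+| = |K' ∩ H_q^+| for the finite set K' ⊆ K in question (same counts on the positive sides). Then the open segment from p to q is contained in (H_p^+ ∩ H_q^+) ∪ (H_p^− ∩ H_q^−), i.e., it lies entirely in one of these two open double-wedge cells. -/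
open Set

private lemma linear_ivt {E : Type*} [AddCommGroup E] [Module ℝ E]
    (f : E →ₗ[ℝ] ℝ) (c : ℝ) (a b : E) (ha : f a ≤ c) (hb : c ≤ f b) :
    ∃ y ∈ segment ℝ a b, f y = c := by
  rcases eq_or_lt_of_le (ha.trans hb) with h | h
  · exact ⟨a, left_mem_segment ℝ a b, by linarith⟩
  · set t : ℝ := (c - f a) / (f b - f a) with ht
    have hs : 0 < f b - f a := by linarith
    have ht0 : 0 ≤ t := div_nonneg (by linarith) hs.le
    have ht1 : t ≤ 1 := by
      rw [div_le_one hs]; linarith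
    refine ⟨(1 - t) • a + t • b, ⟨1 - t, t, by linarith, ht0, by ring, rfl⟩, ?_⟩
    have : f ((1 - t) • a + t • b) = (1 - t) * f a + t * f b := by
      simp [map_add, map_smul, smul_eq_mul]
    rw [this, ht]
    field_simp
    ring

private lemma key_subset {E : Type*} [AddCommGroup E] [Module ℝ E]
    (P : Finset E) (fp fq : E →ₗ[ℝ] ℝ) (cp cq : ℝ)
    (hR : convexHull ℝ (P : Set E) ∩ {x | fp x = cp} ∩ {x | fq x = cq} = ∅)
    (p q : E) (hpP : p ∈ P) (hqP : q ∈ P)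
    (hp1 : fp p = cp) (hq1 : fq q = cq)
    (hpq : cq < fq p) (hqp : fp q < cp) :
    {x ∈ (P : Set E) | cp ≤ fp x} ⊂ {x ∈ (P : Set E) | cq ≤ fq x} := by
  have hpS : p ∈ convexHull ℝ (P : Set E) := subset_convexHull ℝ _ hpP
  have hqS : q ∈ convexHull ℝ (P : Set E) := subset_convexHull ℝ _ hqP
  have hconv : Convex ℝ (convexHull ℝ (P : Set E)) := convex_convexHull ℝ _
  -- sign constancy on hull ∩ Hp
  have sign : ∀ y ∈ convexHull ℝ (P : Set E), fp y = cp → cq < fq y := by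
    intro y hyS hy
    by_contra hle
    push_neg at hle
    have hne : fq y ≠ cq := by
      intro h
      exact absurd (Set.eq_empty_iff_forall_notMem.mp hR y ⟨⟨hyS, hy⟩, h⟩) (fun h => h)
    have hlt : fq y < cq := lt_of_le_of_ne hle hne
    obtain ⟨z, hz, hzq⟩ := linear_ivt fq cq y p hlt.le hpq.le
    obtain ⟨u, v, hu, hv, huv, hzuv⟩ := hz
    have hzS : z ∈ convexHull ℝ (P : Set E) := hconv.segment_subset hyS hpS ⟨u, v, hu, hv, huv, hzuv⟩
    have hzp : fp z = cp := by
      rw [← hzuv] at hzq ⊢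
      simp only [map_add, map_smul, smul_eq_mul, hy, hp1]
      linear_combination cp * huv
    exact absurd (Set.eq_empty_iff_forall_notMem.mp hR z ⟨⟨hzS, hzp⟩, hzq⟩) (fun h => h)
  constructor
  · rintro x ⟨hxP, hx⟩
    refine ⟨hxP, ?_⟩
    rcases eq_or_lt_of_le hx with h | h
    · exact (sign x (subset_convexHull ℝ _ hxP) h.symm).le
    · obtain ⟨z, hz, hzp⟩ := linear_ivt fp cp q x hqp.le h.le
      obtain ⟨u, v, hu, hv, huv, hzuv⟩ := hz
      have hzS : z ∈ convexHull ℝ (P : Set E) :=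
        hconv.segment_subset hqS (subset_convexHull ℝ _ hxP) ⟨u, v, hu, hv, huv, hzuv⟩
      have hzq : cq < fq z := sign z hzS hzp
      rw [← hzuv] at hzq
      simp only [map_add, map_smul, smul_eq_mul, hq1] at hzq
      by_contra hxq
      push_neg at hxq
      have h1 : u * cq + v * fq x - cq = v * (fq x - cq) := by linear_combination cq * huv
      nlinarith [mul_nonneg hv (by linarith : (0:ℝ) ≤ cq - fq x)]
  · intro hsub
    have := hsub ⟨hqP, hq1.ge⟩
    exact absurd this.2 (not_le.mpr hqp)

theorem openSegment_in_double_wedge_cell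
    {d : ℕ} (P : Finset (EuclideanSpace ℝ (Fin d)))
    (fp fq : EuclideanSpace ℝ (Fin d) →ₗ[ℝ] ℝ) (cp cq : ℝ)
    (hfp : fp ≠ 0) (hfq : fq ≠ 0)
    (hconvp : (convexHull ℝ (P : Set (EuclideanSpace ℝ (Fin d))) ∩ {x | fp x = cp}).Nonempty)
    (hconvq : (convexHull ℝ (P : Set (EuclideanSpace ℝ (Fin d))) ∩ {x | fq x = cq}).Nonempty)
    (hR : convexHull ℝ (P : Set (EuclideanSpace ℝ (Fin d))) ∩
        {x | fp x = cp} ∩ {x | fq x = cq} = ∅)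
    (hcount : {x ∈ (P : Set (EuclideanSpace ℝ (Fin d))) | cp ≤ fp x}.ncard =
      {x ∈ (P : Set (EuclideanSpace ℝ (Fin d))) | cq ≤ fq x}.ncard)
    (p q : EuclideanSpace ℝ (Fin d)) (hpP : p ∈ P) (hqP : q ∈ P)
    (hp1 : fp p = cp) (hp2 : fq p ≠ cq) (hq1 : fq q = cq) (hq2 : fp q ≠ cp) :
    openSegment ℝ p q ⊆
      ({x | cp < fp x} ∩ {x | cq < fq x}) ∪ ({x | fp x < cp} ∩ {x | fq x < cq}) := by
  have hfin : ({x ∈ (P : Set (EuclideanSpace ℝ (Fin d))) | cq ≤ fq x}).Finite :=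
    P.finite_toSet.subset (fun x hx => hx.1)
  have hfin' : ({x ∈ (P : Set (EuclideanSpace ℝ (Fin d))) | cp ≤ fp x}).Finite :=
    P.finite_toSet.subset (fun x hx => hx.1)
  have hR' : convexHull ℝ (P : Set (EuclideanSpace ℝ (Fin d))) ∩
      {x | fq x = cq} ∩ {x | fp x = cp} = ∅ := by
    rw [Set.inter_assoc, Set.inter_comm {x | fq x = cq}, ← Set.inter_assoc]
    exact hR
  rcases lt_or_gt_of_ne hp2 with hplt | hpgt
  · rcases lt_or_gt_of_ne hq2 with hqlt | hqgt
    · -- both negative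
      rintro x ⟨a, b, ha, hb, hab, rfl⟩
      right
      constructor
      · show fp (a • p + b • q) < cp
        simp only [map_add, map_smul, smul_eq_mul, hp1]
        have h1 : a * cp + b * fp q - cp = b * (fp q - cp) := by linear_combination cp * hab
        nlinarith [mul_pos hb (by linarith : (0:ℝ) < cp - fp q)]
      · show fq (a • p + b • q) < cq
        simp only [map_add, map_smul, smul_eq_mul, hq1]
        have h1 : a * fq p + b * cq - cq = a * (fq p - cq) := by linear_combination cq * hab
        nlinarith [mul_pos ha (by linarith : (0:ℝ) < cq - fq p)]
    · -- fq p < cq, cp < fp q : contradiction via key_subset swapped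
      exfalso
      have := key_subset P fq fp cq cp hR' q p hqP hpP hq1 hp1 hqgt hplt
      exact absurd hcount (ne_of_gt (Set.ncard_lt_ncard this hfin'))
  · rcases lt_or_gt_of_ne hq2 with hqlt | hqgt
    · -- cq < fq p, fp q < cp : contradiction
      exfalso
      have := key_subset P fp fq cp cq hR p q hpP hqP hp1 hq1 hpgt hqlt
      exact absurd hcount (ne_of_lt (Set.ncard_lt_ncard this hfin))
    · -- both positive
      rintro x ⟨a, b, ha, hb, hab, rfl⟩
      left
      constructor
      · show cp < fp (a • p + b • q)
        simp only [map_add, map_smul, smul_eq_mul, hp1]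
        have h1 : a * cp + b * fp q - cp = b * (fp q - cp) := by linear_combination cp * hab
        nlinarith [mul_pos hb (by linarith : (0:ℝ) < fp q - cp)]
      · show cq < fq (a • p + b • q)
        simp only [map_add, map_smul, smul_eq_mul, hq1]
        have h1 : a * fq p + b * cq - cq = a * (fq p - cq) := by linear_combination cq * hab
        nlinarith [mul_pos ha (by linarith : (0:ℝ) < fq p - cq)]
end

section
/- Let P_1 and P_2 be finite point sets in R^2 in general position (no three points on a line) and well-separated (conv(P_1) ∩ conv(P_2) = ∅). Then for any two distinct oriented lines L_p and L_q, each passing through one point of P_1 and one point of P_2, the α-vectors of L_p and L_q differ; that is, (|P_1 ∩ L_p^+|, |P_2 ∩ L_p^+|) ≠ (|P_1 ∩ L_q^+|, |P_2 ∩ L_q^+|). -/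
open Set
open scoped RealInnerProductSpace

local notation "E" => EuclideanSpace ℝ (Fin 2)

private lemma cross_eq_zero_smul (a0 a1 b0 b1 : ℝ)
    (h : a0 * b1 - a1 * b0 = 0) (ha : a0 ≠ 0 ∨ a1 ≠ 0) :
    ∃ t : ℝ, b0 = t * a0 ∧ b1 = t * a1 := by
  rcases eq_or_ne a0 0 with h0 | h0
  · have ha1 : a1 ≠ 0 := by
      rcases ha with h' | h'
      · exact absurd h0 h'
      · exact h'
    refine ⟨b1 / a1, ?_, by field_simp⟩
    have hb0 : a1 * b0 = 0 := by rw [h0] at h; linarith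
    rcases mul_eq_zero.mp hb0 with h' | h'
    · exact absurd h' ha1
    · rw [h', h0]; ring
  · refine ⟨b0 / a0, by field_simp, ?_⟩
    field_simp
    linarith [h]

private lemma unit_normal_unique (a b u v u' v' : ℝ)
    (h1 : a * u + b * v = 0) (h2 : a * u' + b * v' = 0)
    (hu : u ^ 2 + v ^ 2 = 1) (hu' : u' ^ 2 + v' ^ 2 = 1)
    (hc : 0 < a * v - b * u) (hc' : 0 < a * v' - b * u') :
    u = u' ∧ v = v' := by
  have hab : a ≠ 0 ∨ b ≠ 0 := by
    by_contra hh
    push_neg at hh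
    rw [hh.1, hh.2] at hc
    simp at hc
  have hx : u * v' - v * u' = 0 := by
    rcases hab with h | h
    · have hz : a * (u * v' - v * u') = 0 := by linear_combination v' * h1 - v * h2
      rcases mul_eq_zero.mp hz with h' | h'
      · exact absurd h' h
      · exact h'
    · have hz : b * (u * v' - v * u') = 0 := by linear_combination (-u') * h1 + u * h2
      rcases mul_eq_zero.mp hz with h' | h'
      · exact absurd h' h
      · exact h'
  have hd : (u * u' + v * v' - 1) * (u * u' + v * v' + 1) = 0 := by nlinarith [hx, hu, hu']
  rcases mul_eq_zero.mp hd with h | h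
  · have e1 : (u - u') ^ 2 + (v - v') ^ 2 = 0 := by nlinarith
    constructor
    · nlinarith [sq_nonneg (u - u'), sq_nonneg (v - v')]
    · nlinarith [sq_nonneg (u - u'), sq_nonneg (v - v')]
  · exfalso
    have e1 : (u + u') ^ 2 + (v + v') ^ 2 = 0 := by nlinarith
    have eu : u' = -u := by nlinarith [sq_nonneg (u + u'), sq_nonneg (v + v')]
    have ev : v' = -v := by nlinarith [sq_nonneg (u + u'), sq_nonneg (v + v')]
    rw [eu, ev] at hc'
    linarith

set_option maxHeartbeats 2000000 in
theorem alpha_vectors_of_distinct_colorful_lines_differ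
    (P1 P2 : Finset (EuclideanSpace ℝ (Fin 2)))
    (hgp : ∀ x y z : EuclideanSpace ℝ (Fin 2),
      x ∈ (P1 : Set (EuclideanSpace ℝ (Fin 2))) ∪ (P2 : Set (EuclideanSpace ℝ (Fin 2))) →
      y ∈ (P1 : Set (EuclideanSpace ℝ (Fin 2))) ∪ (P2 : Set (EuclideanSpace ℝ (Fin 2))) →
      z ∈ (P1 : Set (EuclideanSpace ℝ (Fin 2))) ∪ (P2 : Set (EuclideanSpace ℝ (Fin 2))) →
      x ≠ y → y ≠ z → x ≠ z → ¬ Collinear ℝ ({x, y, z} : Set (EuclideanSpace ℝ (Fin 2))))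
    (hsep : convexHull ℝ (P1 : Set (EuclideanSpace ℝ (Fin 2))) ∩
      convexHull ℝ (P2 : Set (EuclideanSpace ℝ (Fin 2))) = ∅)
    (p1 p2 q1 q2 : EuclideanSpace ℝ (Fin 2))
    (hp1 : p1 ∈ P1) (hp2 : p2 ∈ P2) (hq1 : q1 ∈ P1) (hq2 : q2 ∈ P2)
    (np nq : EuclideanSpace ℝ (Fin 2)) (hnp : ‖np‖ = 1) (hnq : ‖nq‖ = 1)
    (htp : ⟪p1, np⟫ = ⟪p2, np⟫) (htq : ⟪q1, nq⟫ = ⟪q2, nq⟫)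
    (hdetp : 0 < Matrix.det !![p1 0, p2 0, np 0; p1 1, p2 1, np 1; 1, 1, 0])
    (hdetq : 0 < Matrix.det !![q1 0, q2 0, nq 0; q1 1, q2 1, nq 1; 1, 1, 0])
    (hdist : ¬ (affineSpan ℝ ({p1, p2} : Set (EuclideanSpace ℝ (Fin 2))) =
        affineSpan ℝ ({q1, q2} : Set (EuclideanSpace ℝ (Fin 2))) ∧ np = nq)) :
    ¬ ({x ∈ (P1 : Set (EuclideanSpace ℝ (Fin 2))) | ⟪p1, np⟫ ≤ ⟪x, np⟫}.ncard =
        {x ∈ (P1 : Set (EuclideanSpace ℝ (Fin 2))) | ⟪q1, nq⟫ ≤ ⟪x, nq⟫}.ncard ∧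
      {x ∈ (P2 : Set (EuclideanSpace ℝ (Fin 2))) | ⟪p1, np⟫ ≤ ⟪x, np⟫}.ncard =
        {x ∈ (P2 : Set (EuclideanSpace ℝ (Fin 2))) | ⟪q1, nq⟫ ≤ ⟪x, nq⟫}.ncard) := by
  classical
  rintro ⟨h1, h2⟩
  -- basic coordinate facts
  have hinner : ∀ x y : E, ⟪x, y⟫ = x 0 * y 0 + x 1 * y 1 := by
    intro x y
    simp [PiLp.inner_apply, RCLike.inner_apply, Fin.sum_univ_two]; ring
  have hnormsq : ∀ n : E, ‖n‖ = 1 → n 0 ^ 2 + n 1 ^ 2 = 1 := by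
    intro n hn
    have hh := real_inner_self_eq_norm_sq n
    rw [hinner, hn] at hh
    linear_combination hh
  have hnp2 := hnormsq np hnp
  have hnq2 := hnormsq nq hnq
  -- the direction coordinates
  obtain ⟨ap, hap⟩ : ∃ a : ℝ, a = p2 0 - p1 0 := ⟨_, rfl⟩
  obtain ⟨bp, hbp⟩ : ∃ a : ℝ, a = p2 1 - p1 1 := ⟨_, rfl⟩
  obtain ⟨aq, haq⟩ : ∃ a : ℝ, a = q2 0 - q1 0 := ⟨_, rfl⟩
  obtain ⟨bq, hbq⟩ : ∃ a : ℝ, a = q2 1 - q1 1 := ⟨_, rfl⟩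
  have hcp : 0 < ap * np 1 - bp * np 0 := by
    have := hdetp
    simp [Matrix.det_fin_three] at this
    rw [hap, hbp]; linarith only [this]
  have hcq : 0 < aq * nq 1 - bq * nq 0 := by
    have := hdetq
    simp [Matrix.det_fin_three] at this
    rw [haq, hbq]; linarith only [this]
  have horthp : ap * np 0 + bp * np 1 = 0 := by
    rw [hinner, hinner] at htp
    rw [hap, hbp]; linarith only [htp]
  have horthq : aq * nq 0 + bq * nq 1 = 0 := by
    rw [hinner, hinner] at htq
    rw [haq, hbq]; linarith only [htq]
  -- the affine halfplane functions
  obtain ⟨Fp, hFp⟩ : ∃ F : (EuclideanSpace ℝ (Fin 2)) → ℝ, F = fun x => ap * (x 1 - p1 1) - bp * (x 0 - p1 0) := ⟨_, rfl⟩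
  obtain ⟨Fq, hFq⟩ : ∃ F : (EuclideanSpace ℝ (Fin 2)) → ℝ, F = fun x => aq * (x 1 - q1 1) - bq * (x 0 - q1 0) := ⟨_, rfl⟩
  have hiffp : ∀ x : E, (⟪p1, np⟫ ≤ ⟪x, np⟫ ↔ 0 ≤ Fp x) := by
    intro x
    have key : Fp x = (ap * np 1 - bp * np 0) *
        ((x 0 - p1 0) * np 0 + (x 1 - p1 1) * np 1) := by
      simp only [hFp]
      linear_combination (np 0 * (x 1 - p1 1) - np 1 * (x 0 - p1 0)) * horthp +
        (bp * (x 0 - p1 0) - ap * (x 1 - p1 1)) * hnp2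
    have hdiff : ⟪x, np⟫ - ⟪p1, np⟫ = (x 0 - p1 0) * np 0 + (x 1 - p1 1) * np 1 := by
      rw [hinner, hinner]; ring
    constructor
    · intro h
      rw [key]
      nlinarith only [hcp, hdiff, h]
    · intro h
      rw [key] at h
      nlinarith only [hcp, hdiff, h]
  have hiffq : ∀ x : E, (⟪q1, nq⟫ ≤ ⟪x, nq⟫ ↔ 0 ≤ Fq x) := by
    intro x
    have key : Fq x = (aq * nq 1 - bq * nq 0) *
        ((x 0 - q1 0) * nq 0 + (x 1 - q1 1) * nq 1) := by
      simp only [hFq]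
      linear_combination (nq 0 * (x 1 - q1 1) - nq 1 * (x 0 - q1 0)) * horthq +
        (bq * (x 0 - q1 0) - aq * (x 1 - q1 1)) * hnq2
    have hdiff : ⟪x, nq⟫ - ⟪q1, nq⟫ = (x 0 - q1 0) * nq 0 + (x 1 - q1 1) * nq 1 := by
      rw [hinner, hinner]; ring
    constructor
    · intro h
      rw [key]
      nlinarith only [hcq, hdiff, h]
    · intro h
      rw [key] at h
      nlinarith only [hcq, hdiff, h]
  -- disjointness of point sets
  have hP1P2 : ∀ z : E, z ∈ P1 → z ∈ P2 → False := by
    intro z hz1 hz2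
    exact (Set.eq_empty_iff_forall_notMem.mp hsep z)
      ⟨subset_convexHull ℝ _ (Finset.mem_coe.mpr hz1),
       subset_convexHull ℝ _ (Finset.mem_coe.mpr hz2)⟩
  -- separating functional
  obtain ⟨f, τ, τ', hfs, hττ', hft⟩ :=
    geometric_hahn_banach_compact_closed (convex_convexHull ℝ (P1 : Set E))
      (P1.finite_toSet.isCompact_convexHull ℝ) (convex_convexHull ℝ (P2 : Set E))
      ((P2.finite_toSet.isCompact_convexHull ℝ).isClosed)
      (Set.disjoint_iff_inter_eq_empty.mpr hsep)
  have hf1 : ∀ x ∈ P1, f x < τ := fun x hx =>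
    hfs x (subset_convexHull ℝ _ (Finset.mem_coe.mpr hx))
  have hf2 : ∀ y ∈ P2, τ < f y := fun y hy =>
    hττ'.trans (hft y (subset_convexHull ℝ _ (Finset.mem_coe.mpr hy)))
  obtain ⟨PP, hPP⟩ : ∃ a : ℝ, a = f p2 - f p1 := ⟨_, rfl⟩
  obtain ⟨QQ, hQQ⟩ : ∃ a : ℝ, a = f q2 - f q1 := ⟨_, rfl⟩
  have hPpos : 0 < PP := by
    have := hf1 p1 hp1; have := hf2 p2 hp2; rw [hPP]; linarith
  have hQpos : 0 < QQ := by
    have := hf1 q1 hq1; have := hf2 q2 hq2; rw [hQQ]; linarith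
  obtain ⟨k, hk⟩ : ∃ a : ℝ, a = ap * bq - bp * aq := ⟨_, rfl⟩
  obtain ⟨Ψ, hΨ⟩ : ∃ F : (EuclideanSpace ℝ (Fin 2)) → ℝ, F = fun x => Fp x * QQ - Fq x * PP := ⟨_, rfl⟩
  -- the key affine identity
  have hI3 : ∀ x y : E, k * (f x - f y) = Ψ x - Ψ y := by
    intro x y
    have hvec : k • (x - y) =
        ((Fq y - Fq x) • (p2 - p1)) + ((Fp x - Fp y) • (q2 - q1)) := by
      ext i
      fin_cases i
      · show k * (x 0 - y 0) =
          (Fq y - Fq x) * (p2 0 - p1 0) + (Fp x - Fp y) * (q2 0 - q1 0)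
        simp only [hFp, hFq, hk, hap, hbp, haq, hbq]
        ring
      · show k * (x 1 - y 1) =
          (Fq y - Fq x) * (p2 1 - p1 1) + (Fp x - Fp y) * (q2 1 - q1 1)
        simp only [hFp, hFq, hk, hap, hbp, haq, hbq]
        ring
    have := congrArg f hvec
    rw [map_smul, map_add, map_smul, map_smul, map_sub, map_sub, map_sub] at this
    simp only [smul_eq_mul] at this
    simp only [hΨ, hPP, hQQ]
    linarith only [this]
  -- value facts
  have hFpp1 : Fp p1 = 0 := by simp only [hFp]; ring
  have hFqq1 : Fq q1 = 0 := by simp only [hFq]; ring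
  have hFpp2 : Fp p2 = 0 := by simp only [hFp, hap, hbp]; ring
  have hFqq2 : Fq q2 = 0 := by simp only [hFq, haq, hbq]; ring
  -- translate the ncard equalities to Finset cards
  have hcoe1p : {x ∈ (P1 : Set E) | ⟪p1, np⟫ ≤ ⟪x, np⟫} =
      ↑(P1.filter fun x => 0 ≤ Fp x) := by
    ext x
    simp only [Set.mem_setOf_eq, Finset.coe_filter, Finset.mem_coe]
    exact and_congr_right fun _ => hiffp x
  have hcoe1q : {x ∈ (P1 : Set E) | ⟪q1, nq⟫ ≤ ⟪x, nq⟫} =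
      ↑(P1.filter fun x => 0 ≤ Fq x) := by
    ext x
    simp only [Set.mem_setOf_eq, Finset.coe_filter, Finset.mem_coe]
    exact and_congr_right fun _ => hiffq x
  have hcoe2p : {x ∈ (P2 : Set E) | ⟪p1, np⟫ ≤ ⟪x, np⟫} =
      ↑(P2.filter fun x => 0 ≤ Fp x) := by
    ext x
    simp only [Set.mem_setOf_eq, Finset.coe_filter, Finset.mem_coe]
    exact and_congr_right fun _ => hiffp x
  have hcoe2q : {x ∈ (P2 : Set E) | ⟪q1, nq⟫ ≤ ⟪x, nq⟫} =
      ↑(P2.filter fun x => 0 ≤ Fq x) := by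
    ext x
    simp only [Set.mem_setOf_eq, Finset.coe_filter, Finset.mem_coe]
    exact and_congr_right fun _ => hiffq x
  rw [hcoe1p, hcoe1q, Set.ncard_coe_finset, Set.ncard_coe_finset] at h1
  rw [hcoe2p, hcoe2q, Set.ncard_coe_finset, Set.ncard_coe_finset] at h2
  have hsplit : ∀ (P : Finset E) (F G : E → ℝ),
      (P.filter fun x => 0 ≤ F x).card =
        (P.filter fun x => (0 ≤ F x ∧ 0 ≤ G x)).card +
        (P.filter fun x => (0 ≤ F x ∧ ¬ 0 ≤ G x)).card := by
    intro P F G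
    rw [← Finset.filter_filter, ← Finset.filter_filter]
    exact (Finset.card_filter_add_card_filter_not (fun x => 0 ≤ G x)).symm
  have hcomm1 : (P1.filter fun x => (0 ≤ Fq x ∧ 0 ≤ Fp x)) =
      (P1.filter fun x => (0 ≤ Fp x ∧ 0 ≤ Fq x)) := by
    apply Finset.filter_congr; intro x _; simp [and_comm]
  have hcomm2 : (P2.filter fun x => (0 ≤ Fq x ∧ 0 ≤ Fp x)) =
      (P2.filter fun x => (0 ≤ Fp x ∧ 0 ≤ Fq x)) := by
    apply Finset.filter_congr; intro x _; simp [and_comm]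
  have hAB1 : (P1.filter fun x => (0 ≤ Fp x ∧ ¬ 0 ≤ Fq x)).card =
      (P1.filter fun x => (0 ≤ Fq x ∧ ¬ 0 ≤ Fp x)).card := by
    have e1 := hsplit P1 Fp Fq
    have e2 := hsplit P1 Fq Fp
    rw [hcomm1] at e2
    omega
  have hAB2 : (P2.filter fun x => (0 ≤ Fp x ∧ ¬ 0 ≤ Fq x)).card =
      (P2.filter fun x => (0 ≤ Fq x ∧ ¬ 0 ≤ Fp x)).card := by
    have e1 := hsplit P2 Fp Fq
    have e2 := hsplit P2 Fq Fp
    rw [hcomm2] at e2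
    omega
  -- wedge sign facts
  have hΨA : ∀ x : E, 0 ≤ Fp x → ¬ 0 ≤ Fq x → 0 < Ψ x := by
    intro x h1x h2x
    push_neg at h2x
    simp only [hΨ]
    nlinarith only [hPpos, hQpos, h1x, h2x]
  have hΨB : ∀ x : E, 0 ≤ Fq x → ¬ 0 ≤ Fp x → Ψ x < 0 := by
    intro x h1x h2x
    push_neg at h2x
    simp only [hΨ]
    nlinarith only [hPpos, hQpos, h1x, h2x]
  rcases lt_trichotomy k 0 with hkneg | hkzero | hkpos
  · -- k < 0
    by_cases hall : ∀ x ∈ P1, 0 < Ψ x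
    · -- B1 empty, but then A1 must be empty, yet p1 ∈ A1
      have hB1 : (P1.filter fun x => (0 ≤ Fq x ∧ ¬ 0 ≤ Fp x)) = ∅ := by
        apply Finset.filter_eq_empty_iff.mpr
        intro x hx hmem
        exact absurd (hΨB x hmem.1 hmem.2) (not_lt.mpr (le_of_lt (hall x hx)))
      have hA1 : (P1.filter fun x => (0 ≤ Fp x ∧ ¬ 0 ≤ Fq x)) = ∅ := by
        apply Finset.card_eq_zero.mp
        rw [hAB1, hB1]; simp
      have hp1mem : p1 ∈ (P1.filter fun x => (0 ≤ Fp x ∧ ¬ 0 ≤ Fq x)) := by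
        refine Finset.mem_filter.mpr ⟨hp1, le_of_eq hFpp1.symm, ?_⟩
        have hΨp1 := hall p1 hp1
        have heq : Ψ p1 = -(Fq p1 * PP) := by simp only [hΨ, hFpp1]; ring
        intro hge
        nlinarith only [hΨp1, heq, hge, hPpos]
      rw [hA1] at hp1mem
      simp at hp1mem
    · push_neg at hall
      obtain ⟨x0, hx0P, hx0Ψ⟩ := hall
      have hP2Ψ : ∀ y ∈ P2, Ψ y < 0 := by
        intro y hy
        have hI := hI3 y x0
        have hyx : 0 < f y - f x0 := by linarith only [hf2 y hy, hf1 x0 hx0P]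
        have hprod : k * (f y - f x0) < 0 := mul_neg_of_neg_of_pos hkneg hyx
        linarith only [hI, hprod, hx0Ψ]
      have hA2 : (P2.filter fun x => (0 ≤ Fp x ∧ ¬ 0 ≤ Fq x)) = ∅ := by
        apply Finset.filter_eq_empty_iff.mpr
        intro x hx hmem
        exact absurd (hΨA x hmem.1 hmem.2) (not_lt.mpr (le_of_lt (hP2Ψ x hx)))
      have hB2 : (P2.filter fun x => (0 ≤ Fq x ∧ ¬ 0 ≤ Fp x)) = ∅ := by
        apply Finset.card_eq_zero.mp
        rw [← hAB2, hA2]; simp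
      have hq2mem : q2 ∈ (P2.filter fun x => (0 ≤ Fq x ∧ ¬ 0 ≤ Fp x)) := by
        refine Finset.mem_filter.mpr ⟨hq2, le_of_eq hFqq2.symm, ?_⟩
        have hΨq2 := hP2Ψ q2 hq2
        have heq : Ψ q2 = Fp q2 * QQ := by simp only [hΨ, hFqq2]; ring
        intro hge
        nlinarith only [hΨq2, heq, hge, hQpos]
      rw [hB2] at hq2mem
      simp at hq2mem
  · -- k = 0 : Ψ is constant
    have hconst : ∀ x y : E, Ψ x = Ψ y := by
      intro x y
      have := hI3 x y
      rw [hkzero] at this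
      linarith only [this]
    have hΨp1 : Ψ p1 = -(Fq p1 * PP) := by simp only [hΨ, hFpp1]; ring
    have hΨq1 : Ψ q1 = Fp q1 * QQ := by simp only [hΨ, hFqq1]; ring
    rcases lt_trichotomy (Ψ p1) 0 with hΨ0 | hΨ0 | hΨ0
    · -- A1 empty, yet q1 ∈ B1 and card A1 = card B1
      have hA1 : (P1.filter fun x => (0 ≤ Fp x ∧ ¬ 0 ≤ Fq x)) = ∅ := by
        apply Finset.filter_eq_empty_iff.mpr
        intro x hx hmem
        have := hΨA x hmem.1 hmem.2
        rw [hconst x p1] at this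
        linarith
      have hB1 : (P1.filter fun x => (0 ≤ Fq x ∧ ¬ 0 ≤ Fp x)) = ∅ := by
        apply Finset.card_eq_zero.mp
        rw [← hAB1, hA1]; simp
      have hq1mem : q1 ∈ (P1.filter fun x => (0 ≤ Fq x ∧ ¬ 0 ≤ Fp x)) := by
        refine Finset.mem_filter.mpr ⟨hq1, le_of_eq hFqq1.symm, ?_⟩
        have hΨq1' : Ψ q1 = Ψ p1 := hconst q1 p1
        intro hge
        rw [hΨq1] at hΨq1'
        nlinarith only [hΨq1', hΨ0, hge, hQpos]
      rw [hB1] at hq1mem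
      simp at hq1mem
    · -- Ψ ≡ 0 : the two lines coincide
      have hFqp1 : Fq p1 = 0 := by
        have hz : Fq p1 * PP = 0 := by
          have := hΨp1; rw [hΨ0] at this; linarith only [this]
        rcases mul_eq_zero.mp hz with h' | h'
        · exact h'
        · exact absurd h' (ne_of_gt hPpos)
      have hFpq1 : Fp q1 = 0 := by
        have h' : Ψ q1 = 0 := by rw [hconst q1 p1, hΨ0]
        rw [hΨq1] at h'
        rcases mul_eq_zero.mp h' with h'' | h''
        · exact h''
        · exact absurd h'' (ne_of_gt hQpos)
      have hFpq2 : Fp q2 = 0 := by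
        have h' : Ψ q2 = 0 := by rw [hconst q2 p1, hΨ0]
        have heq : Ψ q2 = Fp q2 * QQ := by simp only [hΨ, hFqq2]; ring
        rw [heq] at h'
        rcases mul_eq_zero.mp h' with h'' | h''
        · exact h''
        · exact absurd h'' (ne_of_gt hQpos)
      -- direction nondegeneracy
      have hdpne : ap ≠ 0 ∨ bp ≠ 0 := by
        by_contra hh
        push_neg at hh
        rw [hh.1, hh.2] at hcp
        simp at hcp
      have hne12 : p1 ≠ p2 := fun h => hP1P2 p1 hp1 (h ▸ hp2)
      -- q1 = p1
      have hq1p : q1 = p1 := by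
        by_contra hne
        have hnep2q1 : p2 ≠ q1 := fun h => hP1P2 q1 hq1 (h ▸ hp2)
        have hcol : Collinear ℝ ({p1, p2, q1} : Set E) := by
          rw [collinear_iff_of_mem (Set.mem_insert p1 {p2, q1})]
          obtain ⟨t, ht0, ht1⟩ := cross_eq_zero_smul ap bp (q1 0 - p1 0) (q1 1 - p1 1)
            (by simp only [hFp] at hFpq1; linarith only [hFpq1]) hdpne
          refine ⟨p2 - p1, ?_⟩
          intro q hq
          rw [Set.mem_insert_iff, Set.mem_insert_iff, Set.mem_singleton_iff] at hq
          rcases hq with h | h | h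
          · exact ⟨0, by rw [h]; simp⟩
          · refine ⟨1, ?_⟩
            rw [h]
            show p2 = (1 : ℝ) • (p2 - p1) + p1
            rw [one_smul]
            abel
          · refine ⟨t, ?_⟩
            rw [h]
            show q1 = t • (p2 - p1) + p1
            ext i
            fin_cases i
            · show q1 0 = t * (p2 0 - p1 0) + p1 0
              rw [← hap]; linarith only [ht0]
            · show q1 1 = t * (p2 1 - p1 1) + p1 1
              rw [← hbp]; linarith only [ht1]
        exact hgp p1 p2 q1 (Or.inl (Finset.mem_coe.mpr hp1))
          (Or.inr (Finset.mem_coe.mpr hp2)) (Or.inl (Finset.mem_coe.mpr hq1))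
          hne12 hnep2q1 (Ne.symm hne) hcol
      have hq2p : q2 = p2 := by
        by_contra hne
        have hnep1q2 : p1 ≠ q2 := fun h => hP1P2 p1 hp1 (h ▸ hq2)
        have hnep2q2 : p2 ≠ q2 := Ne.symm hne
        have hcol : Collinear ℝ ({p1, p2, q2} : Set E) := by
          rw [collinear_iff_of_mem (Set.mem_insert p1 {p2, q2})]
          obtain ⟨t, ht0, ht1⟩ := cross_eq_zero_smul ap bp (q2 0 - p1 0) (q2 1 - p1 1)
            (by simp only [hFp] at hFpq2; linarith only [hFpq2]) hdpne
          refine ⟨p2 - p1, ?_⟩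
          intro q hq
          rw [Set.mem_insert_iff, Set.mem_insert_iff, Set.mem_singleton_iff] at hq
          rcases hq with h | h | h
          · exact ⟨0, by rw [h]; simp⟩
          · refine ⟨1, ?_⟩
            rw [h]
            show p2 = (1 : ℝ) • (p2 - p1) + p1
            rw [one_smul]
            abel
          · refine ⟨t, ?_⟩
            rw [h]
            show q2 = t • (p2 - p1) + p1
            ext i
            fin_cases i
            · show q2 0 = t * (p2 0 - p1 0) + p1 0
              rw [← hap]; linarith only [ht0]
            · show q2 1 = t * (p2 1 - p1 1) + p1 1
              rw [← hbp]; linarith only [ht1]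
        exact hgp p1 p2 q2 (Or.inl (Finset.mem_coe.mpr hp1))
          (Or.inr (Finset.mem_coe.mpr hp2)) (Or.inr (Finset.mem_coe.mpr hq2))
          hne12 hnep2q2 hnep1q2 hcol
      -- now np = nq
      have horthq' : ap * nq 0 + bp * nq 1 = 0 := by
        rw [hap, hbp, ← hq1p, ← hq2p]; rw [haq, hbq] at horthq; linarith only [horthq]
      have hcq' : 0 < ap * nq 1 - bp * nq 0 := by
        rw [hap, hbp, ← hq1p, ← hq2p]; rw [haq, hbq] at hcq; linarith only [hcq]
      obtain ⟨e0, e1⟩ := unit_normal_unique ap bp (np 0) (np 1) (nq 0) (nq 1)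
        horthp horthq' hnp2 hnq2 hcp hcq'
      have hnpnq : np = nq := by
        ext i
        fin_cases i
        · exact e0
        · exact e1
      exact hdist ⟨by rw [hq1p, hq2p], hnpnq⟩
    · -- 0 < Ψ p1 : B1 empty, yet p1 ∈ A1
      have hB1 : (P1.filter fun x => (0 ≤ Fq x ∧ ¬ 0 ≤ Fp x)) = ∅ := by
        apply Finset.filter_eq_empty_iff.mpr
        intro x hx hmem
        have hxlt := hΨB x hmem.1 hmem.2
        rw [hconst x p1] at hxlt
        linarith only [hxlt, hΨ0]
      have hA1 : (P1.filter fun x => (0 ≤ Fp x ∧ ¬ 0 ≤ Fq x)) = ∅ := by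
        apply Finset.card_eq_zero.mp
        rw [hAB1, hB1]; simp
      have hp1mem : p1 ∈ (P1.filter fun x => (0 ≤ Fp x ∧ ¬ 0 ≤ Fq x)) := by
        refine Finset.mem_filter.mpr ⟨hp1, le_of_eq hFpp1.symm, ?_⟩
        intro hge
        nlinarith only [hΨ0, hΨp1, hge, hPpos]
      rw [hA1] at hp1mem
      simp at hp1mem
  · -- k > 0
    by_cases hall : ∀ x ∈ P1, Ψ x < 0
    · have hA1 : (P1.filter fun x => (0 ≤ Fp x ∧ ¬ 0 ≤ Fq x)) = ∅ := by
        apply Finset.filter_eq_empty_iff.mpr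
        intro x hx hmem
        exact absurd (hΨA x hmem.1 hmem.2) (not_lt.mpr (le_of_lt (hall x hx)))
      have hB1 : (P1.filter fun x => (0 ≤ Fq x ∧ ¬ 0 ≤ Fp x)) = ∅ := by
        apply Finset.card_eq_zero.mp
        rw [← hAB1, hA1]; simp
      have hq1mem : q1 ∈ (P1.filter fun x => (0 ≤ Fq x ∧ ¬ 0 ≤ Fp x)) := by
        refine Finset.mem_filter.mpr ⟨hq1, le_of_eq hFqq1.symm, ?_⟩
        have hΨq1 := hall q1 hq1
        have heq : Ψ q1 = Fp q1 * QQ := by simp only [hΨ, hFqq1]; ring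
        intro hge
        nlinarith only [hΨq1, heq, hge, hQpos]
      rw [hB1] at hq1mem
      simp at hq1mem
    · push_neg at hall
      obtain ⟨x0, hx0P, hx0Ψ⟩ := hall
      have hP2Ψ : ∀ y ∈ P2, 0 < Ψ y := by
        intro y hy
        have hI := hI3 y x0
        have hyx : 0 < f y - f x0 := by linarith only [hf2 y hy, hf1 x0 hx0P]
        have hprod : 0 < k * (f y - f x0) := mul_pos hkpos hyx
        linarith only [hI, hprod, hx0Ψ]
      have hB2 : (P2.filter fun x => (0 ≤ Fq x ∧ ¬ 0 ≤ Fp x)) = ∅ := by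
        apply Finset.filter_eq_empty_iff.mpr
        intro x hx hmem
        exact absurd (hΨB x hmem.1 hmem.2) (not_lt.mpr (le_of_lt (hP2Ψ x hx)))
      have hA2 : (P2.filter fun x => (0 ≤ Fp x ∧ ¬ 0 ≤ Fq x)) = ∅ := by
        apply Finset.card_eq_zero.mp
        rw [hAB2, hB2]; simp
      have hp2mem : p2 ∈ (P2.filter fun x => (0 ≤ Fp x ∧ ¬ 0 ≤ Fq x)) := by
        refine Finset.mem_filter.mpr ⟨hp2, le_of_eq hFpp2.symm, ?_⟩
        have hΨp2 := hP2Ψ p2 hp2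
        have heq : Ψ p2 = -(Fq p2 * PP) := by simp only [hΨ, hFpp2]; ring
        intro hge
        nlinarith only [hΨp2, heq, hge, hPpos]
      rw [hA2] at hp2mem
      simp at hp2mem
end

section
/- Let P_1, ..., P_d be finite well-separated point sets in R^d in weak general position, and let α = (α_1, ..., α_d) with 1 ≤ α_i ≤ |P_i|. If an α-cut exists, then it is unique: there is at most one oriented hyperplane H passing through one point of each P_i with |H^+ ∩ P_i| = α_i for all i. -/
open Set
open scoped RealInnerProductSpace

/-- `P` is in weak general position: no hyperplane contains `d+1` points of `⋃ P i`
spanning at least `d-1` colors. -/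
def WeakGeneralPosition {d : ℕ} (P : Fin d → Finset (EuclideanSpace ℝ (Fin d))) : Prop :=
  ∀ S : Finset (EuclideanSpace ℝ (Fin d)),
    (S : Set (EuclideanSpace ℝ (Fin d))) ⊆ (⋃ i, (P i : Set (EuclideanSpace ℝ (Fin d)))) →
    S.card = d + 1 →
    d - 1 ≤ {i : Fin d | ∃ y ∈ S, y ∈ P i}.ncard →
    ¬ ∃ (f : EuclideanSpace ℝ (Fin d) →ₗ[ℝ] ℝ) (c : ℝ), f ≠ 0 ∧ ∀ y ∈ S, f y = c

/-- The `(d+1) × (d+1)` matrix whose first `d` columns are the points `x j` with a `1`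
appended, and whose last column is `v` with `c` appended. -/
def colMat {d : ℕ} (x : Fin d → EuclideanSpace ℝ (Fin d))
    (v : EuclideanSpace ℝ (Fin d)) (c : ℝ) : Matrix (Fin (d + 1)) (Fin (d + 1)) ℝ :=
  Matrix.of fun i j =>
    if hi : (i : ℕ) < d then
      (if hj : (j : ℕ) < d then x ⟨j, hj⟩ ⟨i, hi⟩ else v ⟨i, hi⟩)
    else
      (if (j : ℕ) < d then (1 : ℝ) else c)

/-- `(x, n, t)` is an `α`-cut: the oriented hyperplane `{y | ⟪y,n⟫ = t}` with unit normal
`n` passes through the colorful tuple `x`, is oriented by the positive-determinant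
convention, and its closed positive halfspace contains exactly `α i` points of `P i`. -/
def IsAlphaCut {d : ℕ} (P : Fin d → Finset (EuclideanSpace ℝ (Fin d))) (α : Fin d → ℕ)
    (x : Fin d → EuclideanSpace ℝ (Fin d)) (n : EuclideanSpace ℝ (Fin d)) (t : ℝ) : Prop :=
  (∀ i, x i ∈ P i) ∧ ‖n‖ = 1 ∧ (∀ i, ⟪x i, n⟫ = t) ∧ 0 < (colMat x n 0).det ∧
    ∀ i, {y ∈ (P i : Set (EuclideanSpace ℝ (Fin d))) | t ≤ ⟪y, n⟫}.ncard = α i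

namespace AlphaCut

variable {d : ℕ}

/-- The basic determinant functional. -/
def Dm (x : Fin d → EuclideanSpace ℝ (Fin d)) (v : EuclideanSpace ℝ (Fin d)) : ℝ :=
  (colMat x v 0).det

lemma colMat_cc (x : Fin d → EuclideanSpace ℝ (Fin d)) (v : EuclideanSpace ℝ (Fin d)) (c : ℝ)
    (i j : Fin d) : colMat x v c i.castSucc j.castSucc = x j i := by
  simp only [colMat, Matrix.of_apply, Fin.coe_castSucc, Fin.is_lt, dif_pos, Fin.eta]

lemma colMat_cl (x : Fin d → EuclideanSpace ℝ (Fin d)) (v : EuclideanSpace ℝ (Fin d)) (c : ℝ)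
    (i : Fin d) : colMat x v c i.castSucc (Fin.last d) = v i := by
  simp only [colMat, Matrix.of_apply, Fin.coe_castSucc, Fin.is_lt, dif_pos, Fin.val_last,
    lt_irrefl, dif_neg, Fin.eta, not_lt_of_gt]
  simp [Fin.eta]

lemma colMat_lc (x : Fin d → EuclideanSpace ℝ (Fin d)) (v : EuclideanSpace ℝ (Fin d)) (c : ℝ)
    (j : Fin d) : colMat x v c (Fin.last d) j.castSucc = 1 := by
  simp [colMat, Fin.is_lt]

lemma colMat_ll (x : Fin d → EuclideanSpace ℝ (Fin d)) (v : EuclideanSpace ℝ (Fin d)) (c : ℝ) :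
    colMat x v c (Fin.last d) (Fin.last d) = c := by
  simp [colMat]

lemma real_inner_coords (x y : EuclideanSpace ℝ (Fin d)) : ⟪x, y⟫ = ∑ i, x i * y i := by
  simp [PiLp.inner_apply, RCLike.inner_apply, starRingEnd_apply]
  exact Finset.sum_congr rfl fun i _ => mul_comm _ _

lemma Dm_ne_zero {y : Fin d → EuclideanSpace ℝ (Fin d)} {ν : EuclideanSpace ℝ (Fin d)} {c : ℝ}
    (hy : AffineIndependent ℝ y) (hν : ν ≠ 0) (hc : ∀ i, ⟪y i, ν⟫ = c) :
    Dm y ν ≠ 0 := by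
  intro h0
  obtain ⟨v, hv0, hmv⟩ := (Matrix.exists_mulVec_eq_zero_iff).2 h0
  have hrow : ∀ i : Fin (d+1), ∑ j : Fin (d+1), colMat y ν 0 i j * v j = 0 := by
    intro i
    have := congrFun hmv i
    simpa [Matrix.mulVec, dotProduct] using this
  have hrowc : ∀ i : Fin d,
      (∑ j : Fin d, v j.castSucc * y j i) + v (Fin.last d) * ν i = 0 := by
    intro i
    have := hrow i.castSucc
    rw [Fin.sum_univ_castSucc] at this
    simp only [colMat_cc, colMat_cl] at this
    rw [← this]
    congr 1
    · exact Finset.sum_congr rfl fun j _ => mul_comm _ _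
    · exact mul_comm _ _
  have hrowl : (∑ j : Fin d, v j.castSucc) = 0 := by
    have := hrow (Fin.last d)
    rw [Fin.sum_univ_castSucc] at this
    simpa [colMat_lc, colMat_ll] using this
  have hlast : v (Fin.last d) = 0 := by
    have h2 : ∑ i : Fin d,
        ((∑ j : Fin d, v j.castSucc * y j i) + v (Fin.last d) * ν i) * ν i = 0 := by
      simp only [hrowc]; simp
    rw [Finset.sum_congr rfl (fun i _ => add_mul _ _ _)] at h2
    rw [Finset.sum_add_distrib] at h2
    have e1 : ∑ i : Fin d, (∑ j : Fin d, v j.castSucc * y j i) * ν i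
        = ∑ j : Fin d, v j.castSucc * ⟪y j, ν⟫ := by
      simp_rw [Finset.sum_mul, real_inner_coords, Finset.mul_sum]
      rw [Finset.sum_comm]
      exact Finset.sum_congr rfl fun j _ => Finset.sum_congr rfl fun i _ => by ring
    have e2 : ∑ i : Fin d, v (Fin.last d) * ν i * ν i = v (Fin.last d) * ⟪ν, ν⟫ := by
      rw [real_inner_coords, Finset.mul_sum]
      exact Finset.sum_congr rfl fun i _ => by ring
    rw [e1, e2] at h2
    simp_rw [hc, ← Finset.sum_mul, hrowl, zero_mul, zero_add] at h2
    rcases mul_eq_zero.1 h2 with h | h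
    · exact h
    · exact absurd h (inner_self_ne_zero.2 hν)
  have hvec : ∑ j : Fin d, v j.castSucc • y j = (0 : EuclideanSpace ℝ (Fin d)) := by
    ext i
    have h3 := hrowc i
    rw [hlast, zero_mul, add_zero] at h3
    have h4 : (∑ j : Fin d, v j.castSucc • y j) i = ∑ j : Fin d, v j.castSucc * y j i := by
      rw [WithLp.ofLp_sum, Finset.sum_apply]
      exact Finset.sum_congr rfl fun j _ => rfl
    rw [h4, h3]
    rfl
  have hz : ∀ j : Fin d, v j.castSucc = 0 := by
    intro j
    exact affineIndependent_iff.1 hy Finset.univ (fun j => v j.castSucc) hrowl hvec j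
      (Finset.mem_univ j)
  apply hv0
  funext j
  refine Fin.lastCases ?_ ?_ j
  · exact hlast
  · exact hz

lemma colMat_neg (y : Fin d → EuclideanSpace ℝ (Fin d)) (v : EuclideanSpace ℝ (Fin d)) :
    colMat y (-v) 0 = (colMat y v 0).updateCol (Fin.last d)
      ((-1 : ℝ) • fun i => colMat y v 0 i (Fin.last d)) := by
  ext i j
  rw [Matrix.updateCol_apply]
  by_cases hj : j = Fin.last d
  · subst hj
    refine Fin.lastCases ?_ ?_ i
    · simp [colMat_ll]
    · intro i
      simp only [colMat_cl, if_pos rfl, Pi.smul_apply, smul_eq_mul]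
      have h5 : (-v) i = -(v i) := rfl
      rw [h5, if_pos trivial]; ring
  · rw [if_neg hj]
    obtain ⟨j', rfl⟩ := Fin.exists_castSucc_eq.2 hj
    refine Fin.lastCases ?_ ?_ i
    · simp [colMat_lc]
    · intro i; simp [colMat_cc]

lemma Dm_neg (y : Fin d → EuclideanSpace ℝ (Fin d)) (v : EuclideanSpace ℝ (Fin d)) :
    Dm y (-v) = -(Dm y v) := by
  unfold Dm
  rw [colMat_neg, Matrix.det_updateCol_smul]
  rw [Matrix.updateCol_eq_self]
  ring

lemma comb_mem_hull {A : Set (EuclideanSpace ℝ (Fin d))} {a b : EuclideanSpace ℝ (Fin d)}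
    (ha : a ∈ convexHull ℝ A) (hb : b ∈ convexHull ℝ A) {s : ℝ} (h0 : 0 ≤ s) (h1 : s ≤ 1) :
    (1 - s) • a + s • b ∈ convexHull ℝ A :=
  (convex_convexHull ℝ A) ha hb (by linarith) h0 (by ring)

lemma comb_inner {a b ν : EuclideanSpace ℝ (Fin d)} {c : ℝ} (ha : ⟪a, ν⟫ = c)
    (hb : ⟪b, ν⟫ = c) (s : ℝ) : ⟪(1 - s) • a + s • b, ν⟫ = c := by
  rw [inner_add_left, real_inner_smul_left, real_inner_smul_left, ha, hb]; ring

lemma slice_sign {P : Fin d → Finset (EuclideanSpace ℝ (Fin d))} (hws : WellSeparated P)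
    {ν : EuclideanSpace ℝ (Fin d)} {c : ℝ} (hν : ν ≠ 0)
    {y z : Fin d → EuclideanSpace ℝ (Fin d)}
    (hy : ∀ i, y i ∈ convexHull ℝ ((P i : Set (EuclideanSpace ℝ (Fin d)))))
    (hyc : ∀ i, ⟪y i, ν⟫ = c)
    (hz : ∀ i, z i ∈ convexHull ℝ ((P i : Set (EuclideanSpace ℝ (Fin d)))))
    (hzc : ∀ i, ⟪z i, ν⟫ = c)
    (hpos : 0 < Dm z ν) : 0 < Dm y ν := by
  set p : ℝ → Fin d → EuclideanSpace ℝ (Fin d) :=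
    fun s j => (1 - s) • y j + s • z j with hp
  have haux : ∀ s ∈ Set.Icc (0:ℝ) 1, Dm (p s) ν ≠ 0 := by
    intro s hs
    refine Dm_ne_zero ?_ hν (fun i => comb_inner (hyc i) (hzc i) s)
    exact hws d id Function.injective_id (p s)
      (fun j => comb_mem_hull (hy j) (hz j) hs.1 hs.2)
  have hcont : Continuous fun s : ℝ => Dm (p s) ν := by
    apply Continuous.matrix_det
    apply continuous_matrix
    intro i j
    refine Fin.lastCases ?_ (fun i' => ?_) i
    · refine Fin.lastCases ?_ (fun j' => ?_) j
      · simpa only [colMat_ll] using continuous_const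
      · simpa only [colMat_lc] using continuous_const
    · refine Fin.lastCases ?_ (fun j' => ?_) j
      · simpa only [colMat_cl] using continuous_const
      · simp only [colMat_cc, hp]
        have : ∀ s : ℝ, ((1 - s) • y j' + s • z j') i' = (1 - s) * y j' i' + s * z j' i' :=
          fun s => rfl
        simp only [this]
        fun_prop
  by_contra hneg
  push_neg at hneg
  have h0 : Dm (p 0) ν = Dm y ν := by
    have : p 0 = y := by funext j; simp [hp]
    rw [this]
  have h1 : Dm (p 1) ν = Dm z ν := by
    have : p 1 = z := by funext j; simp [hp]
    rw [this]
  have : (0:ℝ) ∈ Set.Icc (Dm (p 0) ν) (Dm (p 1) ν) := by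
    rw [h0, h1]; exact ⟨hneg, le_of_lt hpos⟩
  obtain ⟨s, hs, hsz⟩ := intermediate_value_Icc (zero_le_one) hcont.continuousOn this
  exact haux s hs hsz

lemma ncard_filter (F : Finset (EuclideanSpace ℝ (Fin d))) (φ : EuclideanSpace ℝ (Fin d) → Prop)
    [DecidablePred φ] :
    {y ∈ (F : Set (EuclideanSpace ℝ (Fin d))) | φ y}.ncard = (F.filter φ).card := by
  have h : {y ∈ (F : Set (EuclideanSpace ℝ (Fin d))) | φ y} = ↑(F.filter φ) := by
    ext q; simp
  rw [h, Set.ncard_coe_finset]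

lemma finset_swap {α : Type*} {F : Finset α} {φ ψ : α → Prop} [DecidablePred φ] [DecidablePred ψ]
    (hcard : (F.filter φ).card = (F.filter ψ).card) {w : α}
    (hw : w ∈ F) (hψw : ψ w) (hφw : ¬ φ w) : ∃ q ∈ F, φ q ∧ ¬ ψ q := by
  by_contra h
  push_neg at h
  have hsub : F.filter φ ⊆ F.filter ψ := by
    intro q hq
    rw [Finset.mem_filter] at *
    exact ⟨hq.1, h q hq.1 hq.2⟩
  have hss : F.filter φ ⊂ F.filter ψ :=
    ⟨hsub, fun hcon => hφw (Finset.mem_filter.1 (hcon (Finset.mem_filter.2 ⟨hw, hψw⟩))).2⟩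
  exact absurd hcard (Finset.card_lt_card hss).ne

lemma comb_inner_eval (a b w : EuclideanSpace ℝ (Fin d)) (μ : ℝ) :
    ⟪(1 - μ) • a + μ • b, w⟫ = (1 - μ) * ⟪a, w⟫ + μ * ⟪b, w⟫ := by
  rw [inner_add_left, real_inner_smul_left, real_inner_smul_left]

set_option maxHeartbeats 2000000 in
lemma class_selection {F : Finset (EuclideanSpace ℝ (Fin d))}
    {n n' : EuclideanSpace ℝ (Fin d)} {t t' : ℝ}
    {xi xi' : EuclideanSpace ℝ (Fin d)}
    (hxi : xi ∈ F) (hxi' : xi' ∈ F)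
    (hxit : ⟪xi, n⟫ = t) (hxit' : ⟪xi', n'⟫ = t')
    (hcount : {y ∈ (F : Set (EuclideanSpace ℝ (Fin d))) | t ≤ ⟪y, n⟫}.ncard
            = {y ∈ (F : Set (EuclideanSpace ℝ (Fin d))) | t' ≤ ⟪y, n'⟫}.ncard) :
    ∃ y : ℝ → EuclideanSpace ℝ (Fin d), Continuous y ∧
      (∀ r ∈ Set.Icc (0:ℝ) 1, y r ∈ convexHull ℝ (F : Set (EuclideanSpace ℝ (Fin d)))) ∧
      (∀ r ∈ Set.Icc (0:ℝ) 1, ⟪y r, (1 - r) • n - r • n'⟫ = (1 - r) * t - r * t') := by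
  classical
  have gval : ∀ (p : EuclideanSpace ℝ (Fin d)) (r : ℝ),
      ⟪p, (1 - r) • n - r • n'⟫ = (1 - r) * ⟪p, n⟫ - r * ⟪p, n'⟫ := by
    intro p r
    rw [inner_sub_right, real_inner_smul_right, real_inner_smul_right]
  by_cases hz : ∃ z ∈ convexHull ℝ (F : Set (EuclideanSpace ℝ (Fin d))),
      ⟪z, n⟫ = t ∧ ⟪z, n'⟫ = t'
  · obtain ⟨z, hzC, hz1, hz2⟩ := hz
    exact ⟨fun _ => z, continuous_const, fun r _ => hzC,
      fun r _ => by rw [gval, hz1, hz2]⟩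
  push_neg at hz
  have hcard : (F.filter (fun p => t ≤ ⟪p, n⟫)).card
      = (F.filter (fun p => t' ≤ ⟪p, n'⟫)).card := by
    rw [← ncard_filter, ← ncard_filter]
    exact hcount
  obtain ⟨a, haF, hfa0, hf'a0⟩ : ∃ a ∈ F, t ≤ ⟪a, n⟫ ∧ ⟪a, n'⟫ ≤ t' := by
    by_cases h1 : ⟪xi, n'⟫ ≤ t'
    · exact ⟨xi, hxi, le_of_eq hxit.symm, h1⟩
    by_cases h2 : t ≤ ⟪xi', n⟫
    · exact ⟨xi', hxi', h2, le_of_eq hxit'⟩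
    obtain ⟨q, hq, hq1, hq2⟩ := finset_swap hcard hxi' (le_of_eq hxit'.symm) h2
    exact ⟨q, hq, hq1, le_of_lt (lt_of_not_ge hq2)⟩
  obtain ⟨b, hbF, hfb0, hf'b0⟩ : ∃ b ∈ F, ⟪b, n⟫ ≤ t ∧ t' ≤ ⟪b, n'⟫ := by
    by_cases h1 : t' ≤ ⟪xi, n'⟫
    · exact ⟨xi, hxi, le_of_eq hxit, h1⟩
    by_cases h2 : ⟪xi', n⟫ ≤ t
    · exact ⟨xi', hxi', h2, le_of_eq hxit'.symm⟩
    obtain ⟨q, hq, hq1, hq2⟩ := finset_swap hcard.symm hxi (le_of_eq hxit.symm) h1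
    exact ⟨q, hq, le_of_lt (lt_of_not_ge hq2), hq1⟩
  have haC : a ∈ convexHull ℝ (F : Set (EuclideanSpace ℝ (Fin d))) :=
    subset_convexHull ℝ _ (Finset.mem_coe.2 haF)
  have hbC : b ∈ convexHull ℝ (F : Set (EuclideanSpace ℝ (Fin d))) :=
    subset_convexHull ℝ _ (Finset.mem_coe.2 hbF)
  set fa := ⟪a, n⟫ - t with hfa_def
  set f'a := ⟪a, n'⟫ - t' with hf'a_def
  set fb := ⟪b, n⟫ - t with hfb_def
  set f'b := ⟪b, n'⟫ - t' with hf'b_def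
  have hfa : 0 ≤ fa := sub_nonneg.2 hfa0
  have hf'a : f'a ≤ 0 := sub_nonpos.2 hf'a0
  have hfb : fb ≤ 0 := sub_nonpos.2 hfb0
  have hf'b : 0 ≤ f'b := sub_nonneg.2 hf'b0
  set ga : ℝ → ℝ := fun r => (1 - r) * fa - r * f'a with hga
  set gb : ℝ → ℝ := fun r => (1 - r) * fb - r * f'b with hgb
  set Dd : ℝ → ℝ := fun r => ga r - gb r with hDd
  have hgann : ∀ r ∈ Set.Icc (0:ℝ) 1, 0 ≤ ga r := by
    intro r hr
    have h1 : 0 ≤ (1 - r) * fa := mul_nonneg (by linarith [hr.2]) hfa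
    have h2 : r * f'a ≤ 0 := mul_nonpos_of_nonneg_of_nonpos hr.1 hf'a
    simp only [hga]; linarith
  have hgbnn : ∀ r ∈ Set.Icc (0:ℝ) 1, gb r ≤ 0 := by
    intro r hr
    have h1 : (1 - r) * fb ≤ 0 := mul_nonpos_of_nonneg_of_nonpos (by linarith [hr.2]) hfb
    have h2 : 0 ≤ r * f'b := mul_nonneg hr.1 hf'b
    simp only [hgb]; linarith
  have hmkz : ∀ (p q : EuclideanSpace ℝ (Fin d)), p ∈ convexHull ℝ (F : Set (EuclideanSpace ℝ (Fin d))) →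
      q ∈ convexHull ℝ (F : Set (EuclideanSpace ℝ (Fin d))) → ∀ μ : ℝ, 0 ≤ μ → μ ≤ 1 →
      (1 - μ) * ⟪p, n⟫ + μ * ⟪q, n⟫ = t → (1 - μ) * ⟪p, n'⟫ + μ * ⟪q, n'⟫ = t' → False := by
    intro p q hp hq μ h0 h1 he he'
    refine hz ((1 - μ) • p + μ • q) (comb_mem_hull hp hq h0 h1) ?_ ?_
    · rw [comb_inner_eval]; exact he
    · rw [comb_inner_eval]; exact he'
  have hDpos : ∀ r ∈ Set.Icc (0:ℝ) 1, 0 < Dd r := by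
    intro r hr
    rcases lt_or_ge 0 (Dd r) with h | h
    · exact h
    have hDz : ga r = 0 ∧ gb r = 0 := by
      have := hgann r hr
      have := hgbnn r hr
      constructor <;> (simp only [hDd] at h; linarith)
    exfalso
    rcases eq_or_lt_of_le hr.1 with hr0 | hr0
    · -- r = 0 : fa = 0 and fb = 0
      have hfa0' : fa = 0 := by
        have := hDz.1; simp only [hga, ← hr0] at this; linarith
      have hfb0' : fb = 0 := by
        have := hDz.2; simp only [hgb, ← hr0] at this; linarith
      have hf'alt : f'a < 0 := by
        rcases lt_or_eq_of_le hf'a with h | h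
        · exact h
        · exfalso
          have hpa : ⟪a, n⟫ = t := by simp only [hfa_def] at hfa0'; linarith
          exact hz a haC hpa (by simp only [hf'a_def] at h; linarith)
      have hf'blt : 0 < f'b := by
        rcases eq_or_lt_of_le hf'b with h | h
        · exfalso
          have hpb : ⟪b, n⟫ = t := by simp only [hfb_def] at hfb0'; linarith
          exact hz b hbC hpb (by simp only [hf'b_def] at h; linarith)
        · exact h
      set μ := (-f'a) / (f'b - f'a) with hμ
      have hden : 0 < f'b - f'a := by linarith
      have hden0 : f'b - f'a ≠ 0 := ne_of_gt hden
      have hμ0 : 0 ≤ μ := div_nonneg (by linarith) (le_of_lt hden)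
      have hμ1 : μ ≤ 1 := by
        rw [hμ, div_le_one hden]; linarith
      refine hmkz a b haC hbC μ hμ0 hμ1 ?_ ?_
      · have hpa : ⟪a, n⟫ = t := by simp only [hfa_def] at hfa0'; linarith
        have hpb : ⟪b, n⟫ = t := by simp only [hfb_def] at hfb0'; linarith
        rw [hpa, hpb]; ring
      · have hpa : ⟪a, n'⟫ = t' + f'a := by simp only [hf'a_def]; ring
        have hpb : ⟪b, n'⟫ = t' + f'b := by simp only [hf'b_def]; ring
        rw [hpa, hpb, hμ]
        field_simp
        ring
    rcases eq_or_lt_of_le hr.2 with hr1 | hr1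
    · -- r = 1 : f'a = 0 and f'b = 0
      have hf'a0' : f'a = 0 := by
        have := hDz.1; simp only [hga, hr1] at this; linarith
      have hf'b0' : f'b = 0 := by
        have := hDz.2; simp only [hgb, hr1] at this; linarith
      have hfalt : 0 < fa := by
        rcases eq_or_lt_of_le hfa with h | h
        · exfalso
          have h1 : ⟪a, n⟫ = t := by simp only [hfa_def] at h; linarith
          exact hz a haC h1 (by simp only [hf'a_def] at hf'a0'; linarith)
        · exact h
      have hfblt : fb < 0 := by
        rcases eq_or_lt_of_le hfb with h | h
        · exfalso
          have h1 : ⟪b, n⟫ = t := by simp only [hfb_def] at h; linarith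
          exact hz b hbC h1 (by simp only [hf'b_def] at hf'b0'; linarith)
        · exact h
      set μ := fa / (fa - fb) with hμ
      have hden : 0 < fa - fb := by linarith
      have hden0 : fa - fb ≠ 0 := ne_of_gt hden
      have hμ0 : 0 ≤ μ := div_nonneg (le_of_lt hfalt) (le_of_lt hden)
      have hμ1 : μ ≤ 1 := by
        rw [hμ, div_le_one hden]; linarith
      refine hmkz a b haC hbC μ hμ0 hμ1 ?_ ?_
      · have hpa : ⟪a, n⟫ = t + fa := by simp only [hfa_def]; ring
        have hpb : ⟪b, n⟫ = t + fb := by simp only [hfb_def]; ring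
        rw [hpa, hpb, hμ]
        field_simp
        ring
      · have hpa : ⟪a, n'⟫ = t' := by simp only [hf'a_def] at hf'a0'; linarith
        have hpb : ⟪b, n'⟫ = t' := by simp only [hf'b_def] at hf'b0'; linarith
        rw [hpa, hpb]; ring
    · -- 0 < r < 1
      have h1 : 0 ≤ (1 - r) * fa := mul_nonneg (by linarith) hfa
      have h2 : 0 ≤ r * (-f'a) := mul_nonneg (le_of_lt hr0) (by linarith)
      have hga0 := hDz.1
      simp only [hga] at hga0
      have hfa0' : fa = 0 := by
        have hx1 : (1 - r) * fa = 0 := by nlinarith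
        have := mul_eq_zero.1 hx1
        rcases this with h | h
        · linarith
        · exact h
      have hf'a0' : f'a = 0 := by
        have hx1 : r * f'a = 0 := by nlinarith
        rcases mul_eq_zero.1 hx1 with h | h
        · linarith
        · exact h
      exact hz a haC (by simp only [hfa_def] at hfa0'; linarith)
        (by simp only [hf'a_def] at hf'a0'; linarith)
  -- clamp
  set cl : ℝ → ℝ := fun r => max 0 (min 1 r) with hcl
  have hclmem : ∀ r : ℝ, cl r ∈ Set.Icc (0:ℝ) 1 :=
    fun r => ⟨le_max_left _ _, max_le zero_le_one (min_le_left _ _)⟩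
  have hcleq : ∀ r ∈ Set.Icc (0:ℝ) 1, cl r = r := by
    intro r hr
    simp only [hcl]
    rw [min_eq_right hr.2, max_eq_right hr.1]
  have hclcont : Continuous cl := continuous_const.max (continuous_const.min continuous_id)
  set lam : ℝ → ℝ := fun r => ga (cl r) / Dd (cl r) with hlam
  have hlam0 : ∀ r : ℝ, 0 ≤ lam r := by
    intro r
    exact div_nonneg (hgann _ (hclmem r)) (le_of_lt (hDpos _ (hclmem r)))
  have hlam1 : ∀ r : ℝ, lam r ≤ 1 := by
    intro r
    rw [hlam, div_le_one (hDpos _ (hclmem r))]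
    have := hgbnn _ (hclmem r)
    simp only [hDd]
    linarith
  have hlamcont : Continuous lam := by
    have hgacont : Continuous fun r => ga (cl r) := by
      simp only [hga]
      fun_prop
    have hDdcont : Continuous fun r => Dd (cl r) := by
      simp only [hDd, hga, hgb]
      fun_prop
    exact hgacont.div hDdcont (fun r => ne_of_gt (hDpos _ (hclmem r)))
  refine ⟨fun r => (1 - lam r) • a + lam r • b, ?_, ?_, ?_⟩
  · fun_prop
  · intro r _
    exact comb_mem_hull haC hbC (hlam0 r) (hlam1 r)
  · intro r hr
    rw [comb_inner_eval, gval, gval]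
    have h1 : ⟪a, n⟫ = t + fa := by simp only [hfa_def]; ring
    have h2 : ⟪a, n'⟫ = t' + f'a := by simp only [hf'a_def]; ring
    have h3 : ⟪b, n⟫ = t + fb := by simp only [hfb_def]; ring
    have h4 : ⟪b, n'⟫ = t' + f'b := by simp only [hf'b_def]; ring
    rw [h1, h2, h3, h4]
    have hclr : cl r = r := hcleq r hr
    have hDr : 0 < Dd r := hclr ▸ hDpos _ (hclmem r)
    have h5 : lam r * Dd r = ga r := by
      simp only [hlam, hclr]
      exact div_mul_cancel₀ _ (ne_of_gt hDr)
    simp only [hDd, hga, hgb] at h5 ⊢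
    nlinarith [h5]

lemma t_lt_absurd {P : Fin d → Finset (EuclideanSpace ℝ (Fin d))} {α : Fin d → ℕ}
    (i0 : Fin d) {n : EuclideanSpace ℝ (Fin d)} {t t' : ℝ}
    {x x' : Fin d → EuclideanSpace ℝ (Fin d)}
    (hx : IsAlphaCut P α x n t) (hx' : IsAlphaCut P α x' n t') (h : t < t') : False := by
  classical
  obtain ⟨hxP, hn1, hxt, hdet, hcnt⟩ := hx
  obtain ⟨hx'P, hn'1, hx't, hdet', hcnt'⟩ := hx'
  have hAf : ((P i0).filter (fun p => t ≤ ⟪p, n⟫)).card = α i0 := by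
    rw [← ncard_filter]; exact hcnt i0
  have hBf : ((P i0).filter (fun p => t' ≤ ⟪p, n⟫)).card = α i0 := by
    rw [← ncard_filter]; exact hcnt' i0
  have hsub : (P i0).filter (fun p => t' ≤ ⟪p, n⟫) ⊆ (P i0).filter (fun p => t ≤ ⟪p, n⟫) := by
    intro q hq
    rw [Finset.mem_filter] at *
    exact ⟨hq.1, le_trans (le_of_lt h) hq.2⟩
  have hmem : x i0 ∈ (P i0).filter (fun p => t ≤ ⟪p, n⟫) :=
    Finset.mem_filter.2 ⟨hxP i0, le_of_eq (hxt i0).symm⟩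
  have hnmem : x i0 ∉ (P i0).filter (fun p => t' ≤ ⟪p, n⟫) := by
    rw [Finset.mem_filter]
    rintro ⟨-, hcon⟩
    rw [hxt i0] at hcon
    linarith
  have hss : (P i0).filter (fun p => t' ≤ ⟪p, n⟫) ⊂ (P i0).filter (fun p => t ≤ ⟪p, n⟫) :=
    ⟨hsub, fun hcon => hnmem (hcon hmem)⟩
  have := Finset.card_lt_card hss
  rw [hAf, hBf] at this
  exact lt_irrefl _ this

end AlphaCut

theorem alpha_cut_unique
    {d : ℕ} (P : Fin d → Finset (EuclideanSpace ℝ (Fin d))) (α : Fin d → ℕ)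
    (hws : WellSeparated P) (hwgp : WeakGeneralPosition P)
    (hα : ∀ i, 1 ≤ α i ∧ α i ≤ (P i).card) :
    ∀ (n n' : EuclideanSpace ℝ (Fin d)) (t t' : ℝ),
      (∃ x, IsAlphaCut P α x n t) → (∃ x', IsAlphaCut P α x' n' t') →
      n = n' ∧ t = t' := by
  classical
  open AlphaCut in
  rintro n n' t t' ⟨x, hx⟩ ⟨x', hx'⟩
  -- rule out d = 0
  rcases Nat.eq_zero_or_pos d with hd0 | hdpos
  · exfalso
    subst hd0
    have hdet := hx.2.2.2.1
    have : (colMat x n 0).det = 0 := by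
      rw [Matrix.det_fin_one]
      simp [colMat]
    rw [this] at hdet
    exact lt_irrefl _ hdet
  obtain ⟨hxP, hn1, hxt, hdet, hcnt⟩ := hx
  obtain ⟨hx'P, hn'1, hx't, hdet', hcnt'⟩ := hx'
  have hxC : ∀ i, x i ∈ convexHull ℝ ((P i : Set (EuclideanSpace ℝ (Fin d)))) :=
    fun i => subset_convexHull ℝ _ (Finset.mem_coe.2 (hxP i))
  have hx'C : ∀ i, x' i ∈ convexHull ℝ ((P i : Set (EuclideanSpace ℝ (Fin d)))) :=
    fun i => subset_convexHull ℝ _ (Finset.mem_coe.2 (hx'P i))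
  have hnn' : n = n' := by
    by_contra hne
    have hν : ∀ r ∈ Set.Icc (0:ℝ) 1, (1 - r) • n - r • n' ≠ 0 := by
      intro r hr hcon
      have he : (1 - r) • n = r • n' := by rwa [sub_eq_zero] at hcon
      have hnorm : 1 - r = r := by
        have h2 := congrArg norm he
        rwa [norm_smul, norm_smul, hn1, hn'1, mul_one, mul_one, Real.norm_eq_abs,
          Real.norm_eq_abs, abs_of_nonneg (by linarith [hr.2]), abs_of_nonneg hr.1] at h2
      have hr2 : r = 1/2 := by linarith
      apply hne
      apply smul_right_injective (M := EuclideanSpace ℝ (Fin d)) (r := (1/2 : ℝ)) (by norm_num)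
      have h12 : 1 - r = 1/2 := by linarith
      rw [h12, hr2] at he
      exact he
    have hsel : ∀ i : Fin d, ∃ y : ℝ → EuclideanSpace ℝ (Fin d), Continuous y ∧
        (∀ r ∈ Set.Icc (0:ℝ) 1, y r ∈ convexHull ℝ ((P i : Set (EuclideanSpace ℝ (Fin d))))) ∧
        (∀ r ∈ Set.Icc (0:ℝ) 1, ⟪y r, (1 - r) • n - r • n'⟫ = (1 - r) * t - r * t') :=
      fun i => class_selection (hxP i) (hx'P i) (hxt i) (hx't i)
        (by rw [hcnt i, hcnt' i])
    choose Y hYc hYm hYe using hsel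
    set ρ : ℝ → ℝ := fun r => Dm (fun i => Y i r) ((1 - r) • n - r • n') with hρ
    have hρcont : Continuous ρ := by
      apply Continuous.matrix_det
      apply continuous_matrix
      intro i j
      refine Fin.lastCases ?_ (fun i' => ?_) i
      · refine Fin.lastCases ?_ (fun j' => ?_) j
        · simpa only [colMat_ll] using continuous_const
        · simpa only [colMat_lc] using continuous_const
      · refine Fin.lastCases ?_ (fun j' => ?_) j
        · simp only [colMat_cl]
          have hcoord : ∀ r : ℝ, ((1 - r) • n - r • n') i' = (1 - r) * n i' - r * n' i' :=
            fun r => rfl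
          simp only [hcoord]
          fun_prop
        · simp only [colMat_cc]
          exact (EuclideanSpace.proj i').continuous.comp (hYc j')
    have hρne : ∀ r ∈ Set.Icc (0:ℝ) 1, ρ r ≠ 0 := by
      intro r hr
      refine Dm_ne_zero ?_ (hν r hr) (fun i => hYe i r hr)
      exact hws d id Function.injective_id _ (fun i => hYm i r hr)
    have hρ0 : 0 < ρ 0 := by
      have hv0 : (1 - (0:ℝ)) • n - (0:ℝ) • n' = n := by
        rw [sub_zero, zero_smul, sub_zero, one_smul]
      have hst : ρ 0 = Dm (fun i => Y i 0) n := by simp only [hρ]; rw [hv0]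
      rw [hst]
      have h01 : (0:ℝ) ∈ Set.Icc (0:ℝ) 1 := ⟨le_refl 0, zero_le_one⟩
      refine slice_sign hws (c := t) ?_ (fun i => hYm i 0 h01) ?_ hxC hxt hdet
      · intro hcon; rw [hcon] at hn1; simp at hn1
      · intro i
        have := hYe i 0 h01
        rw [hv0] at this
        rw [this]; ring
    have hρ1 : ρ 1 < 0 := by
      have hv1 : (1 - (1:ℝ)) • n - (1:ℝ) • n' = -n' := by
        rw [sub_self, zero_smul, one_smul, zero_sub]
      have hst : ρ 1 = Dm (fun i => Y i 1) (-n') := by simp only [hρ]; rw [hv1]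
      rw [hst, Dm_neg, neg_lt, neg_zero]
      have h11 : (1:ℝ) ∈ Set.Icc (0:ℝ) 1 := ⟨zero_le_one, le_refl 1⟩
      refine slice_sign hws (c := t') ?_ (fun i => hYm i 1 h11) ?_ hx'C hx't hdet'
      · intro hcon; rw [hcon] at hn'1; simp at hn'1
      · intro i
        have h6 := hYe i 1 h11
        rw [hv1] at h6
        rw [inner_neg_right] at h6
        linarith [h6]
    obtain ⟨r, hr, hr0⟩ := intermediate_value_Icc' zero_le_one hρcont.continuousOn
      ⟨le_of_lt hρ1, le_of_lt hρ0⟩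
    exact hρne r hr hr0
  subst hnn'
  refine ⟨rfl, ?_⟩
  rcases lt_trichotomy t t' with h | h | h
  · exact absurd (t_lt_absurd ⟨0, hdpos⟩ ⟨hxP, hn1, hxt, hdet, hcnt⟩
      ⟨hx'P, hn'1, hx't, hdet', hcnt'⟩ h) not_false
  · exact h
  · exact absurd (t_lt_absurd ⟨0, hdpos⟩ ⟨hx'P, hn'1, hx't, hdet', hcnt'⟩
      ⟨hxP, hn1, hxt, hdet, hcnt⟩ h) not_false
end

section
/- Let P_1, P_2 be finite point sets in R^2 and let L_p, L_q be two distinct oriented lines, L_p through p_1 ∈ P_1, p_2 ∈ P_2 and L_q through q_1 ∈ P_1, q_2 ∈ P_2, having the same α-vector, and suppose L_p ∩ L_q is a point x disjoint from conv(P_1) and conv(P_2). If the open segments p_1q_1 and p_2q_2 both lie in H_p^+ ∩ H_q^+ (or both in H_p^− ∩ H_q^−), then conv(P_1) ∩ conv(P_2) ≠ ∅, i.e., P_1 and P_2 are not well-separated. -/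
open Set
open scoped RealInnerProductSpace

private lemma decomp_aux (n0 n1 a0 a1 : ℝ) (hn : n0^2 + n1^2 = 1)
    (h : a0*n0 + a1*n1 = 0) :
    a0 = -((n0*a1 - n1*a0) * n1) ∧ a1 = (n0*a1 - n1*a0) * n0 := by
  constructor
  · linear_combination (-a0)*hn + n0*h
  · linear_combination (-a1)*hn + n1*h

private lemma cross_aux (l m r n : ℝ) (hl : 0 < l) (hm : 0 < m) (hr : r < 0) (hn : n < 0)
    (h5 : m < l) (h6 : n < r) :
    ∃ α β : ℝ, 0 ≤ α ∧ α ≤ 1 ∧ 0 ≤ β ∧ β ≤ 1 ∧ (1-α)*l = (1-β)*m ∧ α*r = β*n := by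
  have hD : n*l - r*m < 0 := by nlinarith
  have hD' : n*l - r*m ≠ 0 := ne_of_lt hD
  refine ⟨n*(l-m)/(n*l-r*m), r*(l-m)/(n*l-r*m), ?_, ?_, ?_, ?_, ?_, ?_⟩
  · rw [le_div_iff_of_neg hD]; nlinarith
  · rw [div_le_iff_of_neg hD]; nlinarith
  · rw [le_div_iff_of_neg hD]; nlinarith
  · rw [div_le_iff_of_neg hD]; nlinarith
  · linear_combination (m - l) * mul_inv_cancel₀ hD'
  · field_simp

private lemma cross_pos (l m r n k : ℝ) (h1 : 0 < l*k) (h2 : 0 < m*k) (h3 : r*k < 0)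
    (h4 : n*k < 0) (h5 : m < l) (h6 : n < r) :
    ∃ α β : ℝ, 0 ≤ α ∧ α ≤ 1 ∧ 0 ≤ β ∧ β ≤ 1 ∧ (1-α)*l = (1-β)*m ∧ α*r = β*n := by
  rcases lt_trichotomy k 0 with hk | hk | hk
  · have hl : l < 0 := by nlinarith
    have hm : m < 0 := by nlinarith
    have hr : 0 < r := by nlinarith
    have hn : 0 < n := by nlinarith
    obtain ⟨α, β, hα0, hα1, hβ0, hβ1, e1, e2⟩ := cross_aux r n l m hr hn hl hm h6 h5
    exact ⟨1-α, 1-β, by linarith, by linarith, by linarith, by linarith,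
      by linarith [e2], by linarith [e1]⟩
  · subst hk; simp at h1
  · have hl : 0 < l := by nlinarith
    have hm : 0 < m := by nlinarith
    have hr : r < 0 := by nlinarith
    have hn : n < 0 := by nlinarith
    exact cross_aux l m r n hl hm hr hn h5 h6

set_option maxHeartbeats 2000000 in
theorem not_wellSeparated_of_same_alpha_vector_dim2
    (P1 P2 : Finset (EuclideanSpace ℝ (Fin 2)))
    (p1 p2 q1 q2 : EuclideanSpace ℝ (Fin 2))
    (hp1 : p1 ∈ P1) (hp2 : p2 ∈ P2) (hq1 : q1 ∈ P1) (hq2 : q2 ∈ P2)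
    (np nq : EuclideanSpace ℝ (Fin 2)) (hnp : ‖np‖ = 1) (hnq : ‖nq‖ = 1)
    (htp : ⟪p1, np⟫ = ⟪p2, np⟫) (htq : ⟪q1, nq⟫ = ⟪q2, nq⟫)
    (hdetp : 0 < Matrix.det !![p1 0, p2 0, np 0; p1 1, p2 1, np 1; 1, 1, 0])
    (hdetq : 0 < Matrix.det !![q1 0, q2 0, nq 0; q1 1, q2 1, nq 1; 1, 1, 0])
    (hdistinct : {y : EuclideanSpace ℝ (Fin 2) | ⟪y, np⟫ = ⟪p1, np⟫} ≠
      {y : EuclideanSpace ℝ (Fin 2) | ⟪y, nq⟫ = ⟪q1, nq⟫})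
    (halpha1 : {x ∈ (P1 : Set (EuclideanSpace ℝ (Fin 2))) | ⟪p1, np⟫ ≤ ⟪x, np⟫}.ncard =
      {x ∈ (P1 : Set (EuclideanSpace ℝ (Fin 2))) | ⟪q1, nq⟫ ≤ ⟪x, nq⟫}.ncard)
    (halpha2 : {x ∈ (P2 : Set (EuclideanSpace ℝ (Fin 2))) | ⟪p1, np⟫ ≤ ⟪x, np⟫}.ncard =
      {x ∈ (P2 : Set (EuclideanSpace ℝ (Fin 2))) | ⟪q1, nq⟫ ≤ ⟪x, nq⟫}.ncard)
    (x : EuclideanSpace ℝ (Fin 2))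
    (hx : {y : EuclideanSpace ℝ (Fin 2) | ⟪y, np⟫ = ⟪p1, np⟫} ∩
      {y : EuclideanSpace ℝ (Fin 2) | ⟪y, nq⟫ = ⟪q1, nq⟫} = {x})
    (hx1 : x ∉ convexHull ℝ (P1 : Set (EuclideanSpace ℝ (Fin 2))))
    (hx2 : x ∉ convexHull ℝ (P2 : Set (EuclideanSpace ℝ (Fin 2))))
    (hseg :
      (openSegment ℝ p1 q1 ⊆ {y | ⟪p1, np⟫ < ⟪y, np⟫} ∩ {y | ⟪q1, nq⟫ < ⟪y, nq⟫} ∧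
        openSegment ℝ p2 q2 ⊆ {y | ⟪p1, np⟫ < ⟪y, np⟫} ∩ {y | ⟪q1, nq⟫ < ⟪y, nq⟫}) ∨
      (openSegment ℝ p1 q1 ⊆ {y | ⟪y, np⟫ < ⟪p1, np⟫} ∩ {y | ⟪y, nq⟫ < ⟪q1, nq⟫} ∧
        openSegment ℝ p2 q2 ⊆ {y | ⟪y, np⟫ < ⟪p1, np⟫} ∩ {y | ⟪y, nq⟫ < ⟪q1, nq⟫})) :
    (convexHull ℝ (P1 : Set (EuclideanSpace ℝ (Fin 2))) ∩
      convexHull ℝ (P2 : Set (EuclideanSpace ℝ (Fin 2)))).Nonempty := by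
  classical
  -- inner product expansion
  have hinner : ∀ a b : EuclideanSpace ℝ (Fin 2), ⟪a, b⟫ = a 0 * b 0 + a 1 * b 1 := by
    intro a b
    simp [PiLp.inner_apply, Fin.sum_univ_two, RCLike.inner_apply]; ring
  -- x lies on both lines
  have hxmem : x ∈ ({y : EuclideanSpace ℝ (Fin 2) | ⟪y, np⟫ = ⟪p1, np⟫} ∩
      {y : EuclideanSpace ℝ (Fin 2) | ⟪y, nq⟫ = ⟪q1, nq⟫}) := by
    rw [hx]; exact rfl
  obtain ⟨hxp, hxq⟩ := hxmem
  simp only [Set.mem_setOf_eq] at hxp hxq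
  rw [hinner, hinner] at hxp hxq
  have htp' := htp; have htq' := htq
  rw [hinner, hinner] at htp' htq'
  -- unit norms in coordinates
  have hnp2 : np 0 ^2 + np 1 ^2 = 1 := by
    have h := real_inner_self_eq_norm_mul_norm np
    rw [hnp, hinner] at h; nlinarith [h]
  have hnq2 : nq 0 ^2 + nq 1 ^2 = 1 := by
    have h := real_inner_self_eq_norm_mul_norm nq
    rw [hnq, hinner] at h; nlinarith [h]
  -- orthogonality of differences
  have hap : (p1 0 - x 0) * np 0 + (p1 1 - x 1) * np 1 = 0 := by linarith [hxp]
  have hbp : (p2 0 - x 0) * np 0 + (p2 1 - x 1) * np 1 = 0 := by linarith [hxp, htp']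
  have hcq : (q1 0 - x 0) * nq 0 + (q1 1 - x 1) * nq 1 = 0 := by linarith [hxq]
  have hdq : (q2 0 - x 0) * nq 0 + (q2 1 - x 1) * nq 1 = 0 := by linarith [hxq, htq']
  obtain ⟨ha0, ha1⟩ := decomp_aux (np 0) (np 1) (p1 0 - x 0) (p1 1 - x 1) hnp2 hap
  obtain ⟨hb0, hb1⟩ := decomp_aux (np 0) (np 1) (p2 0 - x 0) (p2 1 - x 1) hnp2 hbp
  obtain ⟨hc0, hc1⟩ := decomp_aux (nq 0) (nq 1) (q1 0 - x 0) (q1 1 - x 1) hnq2 hcq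
  obtain ⟨hd0, hd1⟩ := decomp_aux (nq 0) (nq 1) (q2 0 - x 0) (q2 1 - x 1) hnq2 hdq
  set l : ℝ := np 0 * (p1 1 - x 1) - np 1 * (p1 0 - x 0) with hl
  set m : ℝ := np 0 * (p2 1 - x 1) - np 1 * (p2 0 - x 0) with hm
  set r : ℝ := nq 0 * (q1 1 - x 1) - nq 1 * (q1 0 - x 0) with hr
  set n : ℝ := nq 0 * (q2 1 - x 1) - nq 1 * (q2 0 - x 0) with hn
  set k : ℝ := np 0 * nq 1 - np 1 * nq 0 with hk
  -- determinant conditions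
  simp [Matrix.det_fin_three] at hdetp hdetq
  have hlm : m < l := by linarith [hl, hm, hdetp]
  have hrn : n < r := by linarith [hr, hn, hdetq]
  -- midpoint memberships
  have hmem1 : (1/2 : ℝ) • p1 + (1/2 : ℝ) • q1 ∈ openSegment ℝ p1 q1 :=
    ⟨1/2, 1/2, by norm_num, by norm_num, by norm_num, rfl⟩
  have hmem2 : (1/2 : ℝ) • p2 + (1/2 : ℝ) • q2 ∈ openSegment ℝ p2 q2 :=
    ⟨1/2, 1/2, by norm_num, by norm_num, by norm_num, rfl⟩
  -- key sign facts, giving the crossing coefficients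
  have elk : nq 0 * (p1 0 - x 0) + nq 1 * (p1 1 - x 1) = l * k := by
    rw [ha0, ha1, hk]; ring
  have emk : nq 0 * (p2 0 - x 0) + nq 1 * (p2 1 - x 1) = m * k := by
    rw [hb0, hb1, hk]; ring
  have erk : np 0 * (q1 0 - x 0) + np 1 * (q1 1 - x 1) = -(r * k) := by
    rw [hc0, hc1, hk]; ring
  have enk : np 0 * (q2 0 - x 0) + np 1 * (q2 1 - x 1) = -(n * k) := by
    rw [hd0, hd1, hk]; ring
  obtain ⟨α, β, hα0, hα1, hβ0, hβ1, e1, e2⟩ :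
      ∃ α β : ℝ, 0 ≤ α ∧ α ≤ 1 ∧ 0 ≤ β ∧ β ≤ 1 ∧ (1-α)*l = (1-β)*m ∧ α*r = β*n := by
    rcases hseg with ⟨hs1, hs2⟩ | ⟨hs1, hs2⟩
    · have h1 := (hs1 hmem1).1
      have h2 := (hs1 hmem1).2
      have h3 := (hs2 hmem2).1
      have h4 := (hs2 hmem2).2
      simp only [Set.mem_setOf_eq, inner_add_left, real_inner_smul_left] at h1 h2 h3 h4
      simp only [hinner] at h1 h2 h3 h4
      refine cross_pos l m r n k ?_ ?_ ?_ ?_ hlm hrn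
      · linarith [elk, h2, hxq]
      · linarith [emk, h4, hxq, htq']
      · linarith [erk, h1, hxp]
      · linarith [enk, h3, hxp, htp']
    · have h1 := (hs1 hmem1).1
      have h2 := (hs1 hmem1).2
      have h3 := (hs2 hmem2).1
      have h4 := (hs2 hmem2).2
      simp only [Set.mem_setOf_eq, inner_add_left, real_inner_smul_left] at h1 h2 h3 h4
      simp only [hinner] at h1 h2 h3 h4
      refine cross_pos l m r n (-k) ?_ ?_ ?_ ?_ hlm hrn
      · have h : l * k < 0 := by linarith [elk, h2, hxq]
        rw [mul_neg]; linarith [h]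
      · have h : m * k < 0 := by linarith [emk, h4, hxq, htq']
        rw [mul_neg]; linarith [h]
      · have h : 0 < r * k := by linarith [erk, h1, hxp]
        rw [mul_neg]; linarith [h]
      · have h : 0 < n * k := by linarith [enk, h3, hxp, htp']
        rw [mul_neg]; linarith [h]
  -- the crossing point
  set z : EuclideanSpace ℝ (Fin 2) := (1-α) • p1 + α • q1 with hz
  have hz1 : z ∈ convexHull ℝ (P1 : Set (EuclideanSpace ℝ (Fin 2))) := by
    exact (convex_convexHull ℝ _) (subset_convexHull ℝ _ hp1) (subset_convexHull ℝ _ hq1)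
      (by linarith) hα0 (by ring)
  have hco0 : ((1-α) • p1 + α • q1 : EuclideanSpace ℝ (Fin 2)) 0 =
      ((1-β) • p2 + β • q2 : EuclideanSpace ℝ (Fin 2)) 0 := by
    simp only [PiLp.add_apply, PiLp.smul_apply, smul_eq_mul]
    linear_combination (1-α)*ha0 + α*hc0 - (1-β)*hb0 - β*hd0 - np 1 * e1 - nq 1 * e2
  have hco1 : ((1-α) • p1 + α • q1 : EuclideanSpace ℝ (Fin 2)) 1 =
      ((1-β) • p2 + β • q2 : EuclideanSpace ℝ (Fin 2)) 1 := by
    simp only [PiLp.add_apply, PiLp.smul_apply, smul_eq_mul]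
    linear_combination (1-α)*ha1 + α*hc1 - (1-β)*hb1 - β*hd1 + np 0 * e1 + nq 0 * e2
  have hzeq : z = (1-β) • p2 + β • q2 := by
    rw [hz]
    ext i
    fin_cases i <;> assumption
  have hz2 : z ∈ convexHull ℝ (P2 : Set (EuclideanSpace ℝ (Fin 2))) := by
    rw [hzeq]
    exact (convex_convexHull ℝ _) (subset_convexHull ℝ _ hp2) (subset_convexHull ℝ _ hq2)
      (by linarith) hβ0 (by ring)
  exact ⟨z, hz1, hz2⟩
end

section
/- Let P_1, ..., P_d be finite point sets in R^d and let H_p, H_q be two distinct hyperplanes, each affinely spanned by a colorful set (one point from each P_i), with the same α-vector, such that R = H_p ∩ H_q is a (d−2)-flat disjoint from conv(P_i) for every i. Then there exist points z_1 ∈ conv(P_1), ..., z_d ∈ conv(P_d) whose affine hull has dimension at most d−2; in particular P_1, ..., P_d are not well-separated. -/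
open Set
open scoped RealInnerProductSpace

lemma sum_smul_apply {d m : ℕ} (w : Fin m → ℝ) (x : Fin m → EuclideanSpace ℝ (Fin d)) (k : Fin d) :
    (∑ j, w j • x j) k = ∑ j, w j * x j k := by
  induction (Finset.univ : Finset (Fin m)) using Finset.induction with
  | empty => simp
  | @insert a s h ih => rw [Finset.sum_insert h, Finset.sum_insert h, ← ih]; rfl

lemma key_dep {d : ℕ} (x : Fin d → EuclideanSpace ℝ (Fin d)) (n : EuclideanSpace ℝ (Fin d))
    (t : ℝ) (hn : n ≠ 0) (hx : ∀ i, ⟪x i, n⟫ = t) (hdet : (colMat x n 0).det = 0) :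
    ¬ AffineIndependent ℝ x := by
  classical
  obtain ⟨v, hv0, hv⟩ := Matrix.exists_mulVec_eq_zero_iff.2 hdet
  have hrow : ∀ i : Fin (d+1), ∑ j, colMat x n 0 i j * v j = 0 := by
    intro i
    have := congrFun hv i
    simpa [Matrix.mulVec, dotProduct] using this
  set w : Fin d → ℝ := fun j => v j.castSucc with hw
  have hsumw : ∑ j, w j = 0 := by
    have := hrow (Fin.last d)
    rw [Fin.sum_univ_castSucc] at this
    simpa [colMat, w] using this
  have hrowk : ∀ k : Fin d, (∑ j, w j * x j k) + v (Fin.last d) * n k = 0 := by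
    intro k
    have := hrow k.castSucc
    rw [Fin.sum_univ_castSucc] at this
    simp only [colMat, Matrix.of_apply, Fin.coe_castSucc, Fin.is_lt, dif_pos, Fin.eta,
      Fin.val_last, lt_irrefl, dif_neg, not_lt, le_refl, dite_false] at this
    rw [← this]
    congr 1
    · exact Finset.sum_congr rfl fun j _ => by rw [mul_comm]
    · ring
  have hinner : ∀ y : EuclideanSpace ℝ (Fin d), ⟪y, n⟫ = ∑ k, y k * n k := by
    intro y
    simp [PiLp.inner_apply, RCLike.inner_apply, mul_comm]
  have hlast : v (Fin.last d) = 0 := by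
    have hsum : ∑ k, ((∑ j, w j * x j k) + v (Fin.last d) * n k) * n k = 0 := by
      simp only [hrowk]; simp
    have e1 : ∑ k, (∑ j, w j * x j k) * n k = ∑ j, w j * ⟪x j, n⟫ := by
      simp only [hinner, Finset.sum_mul]
      rw [Finset.sum_comm]
      exact Finset.sum_congr rfl fun j _ => by
        rw [Finset.mul_sum]; exact Finset.sum_congr rfl fun k _ => by ring
    have e2 : ∑ k, (v (Fin.last d) * n k) * n k = v (Fin.last d) * ⟪n, n⟫ := by
      rw [hinner n, Finset.mul_sum]
      exact Finset.sum_congr rfl fun k _ => by ring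
    simp only [add_mul, Finset.sum_add_distrib, e1, e2] at hsum
    simp only [hx] at hsum
    rw [← Finset.sum_mul, hsumw, zero_mul, zero_add] at hsum
    have hnn : ⟪n, n⟫ ≠ (0:ℝ) := fun h => hn (inner_self_eq_zero.1 h)
    exact (mul_eq_zero.1 hsum).resolve_right hnn
  have hvec : ∑ j, w j • x j = 0 := by
    ext k
    have := hrowk k
    rw [hlast, zero_mul, add_zero] at this
    rw [show (0 : EuclideanSpace ℝ (Fin d)) k = 0 from rfl]
    rw [sum_smul_apply]
    exact this
  have hex : ∃ j, w j ≠ 0 := by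
    by_contra hno
    push_neg at hno
    apply hv0
    funext i
    rcases Fin.eq_castSucc_or_eq_last i with ⟨j, rfl⟩ | rfl
    · exact hno j
    · exact hlast
  intro hind
  obtain ⟨j, hj⟩ := hex
  exact hj (affineIndependent_iff.1 hind Finset.univ w hsumw hvec j (Finset.mem_univ j))

lemma det_colMat_neg {d : ℕ} (x : Fin d → EuclideanSpace ℝ (Fin d))
    (n : EuclideanSpace ℝ (Fin d)) :
    (colMat x (-n) 0).det = -(colMat x n 0).det := by
  classical
  have h : colMat x (-n) 0 =
      colMat x n 0 * Matrix.diagonal (fun j : Fin (d+1) => if (j:ℕ) < d then (1:ℝ) else -1) := by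
    ext i j
    rw [Matrix.mul_diagonal]
    by_cases hi : (i:ℕ) < d <;> by_cases hj : (j:ℕ) < d <;>
      simp [colMat, hi, hj]
  rw [h, Matrix.det_mul, Matrix.det_diagonal]
  have : ∏ j : Fin (d+1), (if (j:ℕ) < d then (1:ℝ) else -1) = -1 := by
    rw [Fin.prod_univ_castSucc]
    simp
  rw [this]; ring

abbrev Esp (d : ℕ) := EuclideanSpace ℝ (Fin d)

noncomputable def gf {d : ℕ} (np nq : Esp d) (tp tq s : ℝ) (y : Esp d) : ℝ :=
  (1 - s) * (⟪y, np⟫ - tp) - s * (⟪y, nq⟫ - tq)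

noncomputable def nv {d : ℕ} (np nq : Esp d) (s : ℝ) : Esp d := (1 - s) • np - s • nq

lemma gf_eq_inner {d : ℕ} (np nq : Esp d) (tp tq s : ℝ) (y : Esp d) :
    gf np nq tp tq s y = ⟪y, nv np nq s⟫ - ((1 - s) * tp - s * tq) := by
  rw [gf, nv, inner_sub_right, real_inner_smul_right, real_inner_smul_right]
  ring

lemma gf_affine {d : ℕ} (np nq : Esp d) (tp tq s : ℝ) (a b : Esp d) (t : ℝ) :
    gf np nq tp tq s (a + t • (b - a)) =
      gf np nq tp tq s a + t * (gf np nq tp tq s b - gf np nq tp tq s a) := by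
  rw [gf, gf, gf, inner_add_left, real_inner_smul_left, inner_sub_left,
    inner_add_left, real_inner_smul_left, inner_sub_left]
  ring

noncomputable def tpar {d : ℕ} (np nq : Esp d) (tp tq : ℝ) (a b : Esp d) (s : ℝ) : ℝ :=
  gf np nq tp tq s a / (gf np nq tp tq s a - gf np nq tp tq s b)

noncomputable def zpath {d : ℕ} (np nq : Esp d) (tp tq : ℝ) (a b : Esp d) (s : ℝ) : Esp d :=
  a + tpar np nq tp tq a b s • (b - a)

lemma gf_zpath {d : ℕ} (np nq : Esp d) (tp tq : ℝ) (a b : Esp d) (s : ℝ)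
    (h3 : gf np nq tp tq s a ≠ gf np nq tp tq s b) :
    gf np nq tp tq s (zpath np nq tp tq a b s) = 0 := by
  rw [zpath, gf_affine, tpar]
  have h := sub_ne_zero.2 h3
  field_simp
  ring

lemma tpar_mem {d : ℕ} (np nq : Esp d) (tp tq : ℝ) (a b : Esp d) (s : ℝ)
    (h2 : gf np nq tp tq s a * gf np nq tp tq s b ≤ 0)
    (h3 : gf np nq tp tq s a ≠ gf np nq tp tq s b) :
    tpar np nq tp tq a b s ∈ Icc (0:ℝ) 1 := by
  rw [tpar]
  set u := gf np nq tp tq s a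
  set v := gf np nq tp tq s b
  have hne : u - v ≠ 0 := sub_ne_zero.2 h3
  rcases mul_nonpos_iff.1 h2 with ⟨hu, hv⟩ | ⟨hu, hv⟩
  · have hden : 0 < u - v := lt_of_le_of_ne (by linarith) (Ne.symm hne)
    exact ⟨div_nonneg hu hden.le, (div_le_one hden).2 (by linarith)⟩
  · have hden : u - v < 0 := lt_of_le_of_ne (by linarith) hne
    constructor
    · rw [div_nonneg_iff]; right; exact ⟨hu, hden.le⟩
    · rw [div_le_one_iff]; right; right; exact ⟨hden, by linarith⟩

lemma seg_mem {d : ℕ} {C : Set (Esp d)} (hC : Convex ℝ C) {a b : Esp d} (ha : a ∈ C) (hb : b ∈ C)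
    {t : ℝ} (ht : t ∈ Icc (0:ℝ) 1) : a + t • (b - a) ∈ C := by
  have : a + t • (b - a) = (1 - t) • a + t • b := by
    rw [smul_sub, sub_smul, one_smul]; abel
  rw [this]
  exact hC ha hb (by linarith [ht.2]) ht.1 (by ring)

lemma zpath_mem {d : ℕ} (np nq : Esp d) (tp tq : ℝ) {C : Set (Esp d)} (hC : Convex ℝ C)
    {a b : Esp d} (ha : a ∈ C) (hb : b ∈ C) {s : ℝ}
    (h2 : gf np nq tp tq s a * gf np nq tp tq s b ≤ 0)
    (h3 : gf np nq tp tq s a ≠ gf np nq tp tq s b) :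
    zpath np nq tp tq a b s ∈ C :=
  seg_mem hC ha hb (tpar_mem np nq tp tq a b s h2 h3)

lemma gf_continuous {d : ℕ} (np nq : Esp d) (tp tq : ℝ) (y : Esp d) :
    Continuous fun s => gf np nq tp tq s y := by
  unfold gf; fun_prop

lemma tpar_contOn {d : ℕ} (np nq : Esp d) (tp tq : ℝ) (a b : Esp d) {S : Set ℝ}
    (h3 : ∀ s ∈ S, gf np nq tp tq s a ≠ gf np nq tp tq s b) :
    ContinuousOn (tpar np nq tp tq a b) S := by
  apply ContinuousOn.div (gf_continuous np nq tp tq a).continuousOn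
    (((gf_continuous np nq tp tq a).sub (gf_continuous np nq tp tq b)).continuousOn)
  intro s hs
  exact sub_ne_zero.2 (h3 s hs)

lemma contOn_det {N : ℕ} {S : Set ℝ} (M : ℝ → Matrix (Fin N) (Fin N) ℝ)
    (h : ∀ i j, ContinuousOn (fun θ => M θ i j) S) :
    ContinuousOn (fun θ => (M θ).det) S := by
  simp only [Matrix.det_apply']
  apply continuousOn_finset_sum
  intro σ _
  exact ContinuousOn.mul continuousOn_const
    (continuousOn_finset_prod _ fun i _ => h (σ i) i)

lemma inner_seg {d : ℕ} (a b v : Esp d) (t : ℝ) :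
    ⟪a + t • (b - a), v⟫ = ⟪a, v⟫ + t * (⟪b, v⟫ - ⟪a, v⟫) := by
  rw [inner_add_left, real_inner_smul_left, inner_sub_left]

lemma exists_partner {d : ℕ} (np nq : Esp d) (tp tq : ℝ) (Pi : Finset (Esp d))
    (pi qi : Esp d) (hpmem : pi ∈ Pi) (hqmem : qi ∈ Pi)
    (hpt : ⟪pi, np⟫ = tp) (hqt : ⟪qi, nq⟫ = tq)
    (halpha : {y ∈ (Pi : Set (Esp d)) | tp ≤ ⟪y, np⟫}.ncard =
      {y ∈ (Pi : Set (Esp d)) | tq ≤ ⟪y, nq⟫}.ncard)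
    (hR : ∀ y ∈ convexHull ℝ (Pi : Set (Esp d)), ⟪y, np⟫ = tp → ⟪y, nq⟫ = tq → False) :
    ∃ mm ∈ convexHull ℝ (Pi : Set (Esp d)),
      ∀ s ∈ Icc (0:ℝ) 1, gf np nq tp tq s pi * gf np nq tp tq s mm ≤ 0 ∧
        gf np nq tp tq s pi ≠ gf np nq tp tq s mm := by
  classical
  set b := ⟪qi, np⟫ - tp with hbdef
  set c := ⟪pi, nq⟫ - tq with hcdef
  have hgp : ∀ s : ℝ, gf np nq tp tq s pi = -(s * c) := by
    intro s; rw [gf, hpt, ← hcdef]; ring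
  have hgq : ∀ s : ℝ, gf np nq tp tq s qi = (1 - s) * b := by
    intro s; rw [gf, hqt, ← hbdef]; ring
  have hb0 : b ≠ 0 := by
    intro h
    exact hR qi (subset_convexHull ℝ _ hqmem) (sub_eq_zero.1 (hbdef.symm.trans h)) hqt
  have hc0 : c ≠ 0 := by
    intro h
    exact hR pi (subset_convexHull ℝ _ hpmem) hpt (sub_eq_zero.1 (hcdef.symm.trans h))
  rcases hb0.lt_or_gt with hb | hb <;> rcases hc0.lt_or_gt with hc | hc
  · -- b < 0, c < 0 : same sign, take qi
    refine ⟨qi, subset_convexHull ℝ _ hqmem, fun s hs => ?_⟩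
    obtain ⟨hs0, hs1⟩ := hs
    rw [hgp s, hgq s]
    constructor
    · have h1 : 0 ≤ -(s * c) := by nlinarith
      have h2 : (1 - s) * b ≤ 0 := by nlinarith
      exact mul_nonpos_iff.2 (Or.inl ⟨h1, h2⟩)
    · intro heq
      rcases eq_or_lt_of_le hs0 with h0 | h0
      · rw [← h0] at heq; nlinarith
      · have h2 : (1 - s) * b ≤ 0 := by nlinarith
        nlinarith [mul_pos h0 (neg_pos.2 hc)]
  · -- b < 0, 0 < c : mixed case 2
    have hnsub : ¬ ({y ∈ (Pi : Set (Esp d)) | tp ≤ ⟪y, np⟫} ⊆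
        {y ∈ (Pi : Set (Esp d)) | tq ≤ ⟪y, nq⟫}) := by
      intro hsub
      have hqB : qi ∈ {y ∈ (Pi : Set (Esp d)) | tq ≤ ⟪y, nq⟫} := ⟨hqmem, hqt.ge⟩
      have hqA : qi ∉ {y ∈ (Pi : Set (Esp d)) | tp ≤ ⟪y, np⟫} := by
        intro hmem
        have h2 := hmem.2
        have h3 : ⟪qi, np⟫ = tp + b := by rw [hbdef]; ring
        rw [h3] at h2; linarith
      have hfin : {y ∈ (Pi : Set (Esp d)) | tq ≤ ⟪y, nq⟫}.Finite :=
        Pi.finite_toSet.subset fun y hy => hy.1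
      have hlt := Set.ncard_lt_ncard ⟨hsub, fun h => hqA (h hqB)⟩ hfin
      rw [halpha] at hlt; exact lt_irrefl _ hlt
    obtain ⟨w, hwA, hwB⟩ := Set.not_subset.1 hnsub
    have hwP : w ∈ Pi := hwA.1
    have hw0 : tp ≤ ⟪w, np⟫ := hwA.2
    have hw1 : ⟪w, nq⟫ < tq := by
      by_contra hcon
      exact hwB ⟨hwA.1, le_of_not_gt hcon⟩
    have he1 : ⟪w, nq⟫ - tq < 0 := by linarith
    have hw0' : 0 < ⟪w, np⟫ - tp := by
      rcases eq_or_lt_of_le hw0 with heq | h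
      swap
      · linarith
      exfalso
      have hden : 0 < c - (⟪w, nq⟫ - tq) := by linarith
      have hlam : c / (c - (⟪w, nq⟫ - tq)) ∈ Icc (0:ℝ) 1 :=
        ⟨div_nonneg hc.le hden.le, (div_le_one hden).2 (by linarith)⟩
      have hx : pi + (c / (c - (⟪w, nq⟫ - tq))) • (w - pi) ∈ convexHull ℝ (Pi : Set (Esp d)) :=
        seg_mem (convex_convexHull ℝ _) (subset_convexHull ℝ _ hpmem)
          (subset_convexHull ℝ _ hwP) hlam
      apply hR _ hx
      · rw [inner_seg, hpt, ← heq]; ring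
      · rw [inner_seg]
        have h5 : ⟪pi, nq⟫ = tq + c := by rw [hcdef]; ring
        have hne : c - (⟪w, nq⟫ - tq) ≠ 0 := hden.ne'
        have harith : ∀ (cc X T : ℝ), cc - (X - T) ≠ 0 →
            T + cc + cc / (cc - (X - T)) * (X - (T + cc)) = T := by
          intro cc X T h
          field_simp
          ring
        rw [h5]
        exact harith c ⟪w, nq⟫ tq hne
    refine ⟨w, subset_convexHull ℝ _ hwP, fun s hs => ?_⟩
    obtain ⟨hs0, hs1⟩ := hs
    have hgw : gf np nq tp tq s w = (1-s)*(⟪w, np⟫ - tp) - s*(⟪w, nq⟫ - tq) := rfl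
    rw [hgp s, hgw]
    constructor
    · have h1 : -(s * c) ≤ 0 := by nlinarith
      have h2 : 0 ≤ (1-s)*(⟪w, np⟫ - tp) - s*(⟪w, nq⟫ - tq) := by nlinarith
      exact mul_nonpos_iff.2 (Or.inr ⟨h1, h2⟩)
    · intro heq
      rcases eq_or_lt_of_le hs0 with h0 | h0
      · rw [← h0] at heq; nlinarith
      · nlinarith [mul_pos h0 hc]
  · -- 0 < b, c < 0 : mixed case 1
    have hnsub : ¬ ({y ∈ (Pi : Set (Esp d)) | tq ≤ ⟪y, nq⟫} ⊆
        {y ∈ (Pi : Set (Esp d)) | tp ≤ ⟪y, np⟫}) := by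
      intro hsub
      have hpA : pi ∈ {y ∈ (Pi : Set (Esp d)) | tp ≤ ⟪y, np⟫} := ⟨hpmem, hpt.ge⟩
      have hpB : pi ∉ {y ∈ (Pi : Set (Esp d)) | tq ≤ ⟪y, nq⟫} := by
        intro hmem
        have h2 := hmem.2
        have h3 : ⟪pi, nq⟫ = tq + c := by rw [hcdef]; ring
        rw [h3] at h2; linarith
      have hfin : {y ∈ (Pi : Set (Esp d)) | tp ≤ ⟪y, np⟫}.Finite :=
        Pi.finite_toSet.subset fun y hy => hy.1
      have hlt := Set.ncard_lt_ncard ⟨hsub, fun h => hpB (h hpA)⟩ hfin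
      rw [halpha] at hlt; exact lt_irrefl _ hlt
    obtain ⟨w, hwB, hwA⟩ := Set.not_subset.1 hnsub
    have hwP : w ∈ Pi := hwB.1
    have hw1 : tq ≤ ⟪w, nq⟫ := hwB.2
    have hw0 : ⟪w, np⟫ < tp := by
      by_contra hcon
      exact hwA ⟨hwB.1, le_of_not_gt hcon⟩
    have he0 : ⟪w, np⟫ - tp < 0 := by linarith
    have he1 : 0 ≤ ⟪w, nq⟫ - tq := by linarith
    refine ⟨w, subset_convexHull ℝ _ hwP, fun s hs => ?_⟩
    obtain ⟨hs0, hs1⟩ := hs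
    have hgw : gf np nq tp tq s w = (1-s)*(⟪w, np⟫ - tp) - s*(⟪w, nq⟫ - tq) := rfl
    rw [hgp s, hgw]
    constructor
    · have h1 : 0 ≤ -(s * c) := by nlinarith
      have h2 : (1-s)*(⟪w, np⟫ - tp) - s*(⟪w, nq⟫ - tq) ≤ 0 := by nlinarith
      exact mul_nonpos_iff.2 (Or.inl ⟨h1, h2⟩)
    · intro heq
      rcases eq_or_lt_of_le hs0 with h0 | h0
      · rw [← h0] at heq; nlinarith
      · nlinarith [mul_pos h0 (neg_pos.2 hc)]
  · -- 0 < b, 0 < c : same sign, take qi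
    refine ⟨qi, subset_convexHull ℝ _ hqmem, fun s hs => ?_⟩
    obtain ⟨hs0, hs1⟩ := hs
    rw [hgp s, hgq s]
    constructor
    · have h1 : -(s * c) ≤ 0 := by nlinarith
      have h2 : 0 ≤ (1 - s) * b := by nlinarith
      exact mul_nonpos_iff.2 (Or.inr ⟨h1, h2⟩)
    · intro heq
      rcases eq_or_lt_of_le hs0 with h0 | h0
      · rw [← h0] at heq; nlinarith
      · nlinarith [mul_pos h0 hc]

lemma conclude {d : ℕ} (hd2 : 2 ≤ d) (P : Fin d → Finset (Esp d))
    (z : Fin d → Esp d) (hzc : ∀ i, z i ∈ convexHull ℝ (P i : Set (Esp d)))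
    (hdep : ¬ AffineIndependent ℝ z) :
    (∀ i, z i ∈ convexHull ℝ (P i : Set (Esp d))) ∧
      (Module.finrank ℝ (affineSpan ℝ (Set.range z)).direction : ℤ) ≤ (d : ℤ) - 2 ∧
      ¬ WellSeparated P := by
  refine ⟨hzc, ?_, ?_⟩
  · have hcard : Fintype.card (Fin d) = (d - 2) + 2 := by simp; omega
    have h := (finrank_vectorSpan_le_iff_not_affineIndependent ℝ z hcard).2 hdep
    rw [direction_affineSpan]
    have h2 : (Module.finrank ℝ (vectorSpan ℝ (Set.range z)) : ℤ) ≤ ((d - 2 : ℕ) : ℤ) := by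
      exact_mod_cast h
    omega
  · intro hws
    exact hdep (hws d id Function.injective_id z hzc)

theorem degenerate_colorful_selection_of_two_colorful_hyperplanes_same_alpha
    {d : ℕ} (P : Fin d → Finset (EuclideanSpace ℝ (Fin d)))
    (p q : Fin d → EuclideanSpace ℝ (Fin d))
    (np nq : EuclideanSpace ℝ (Fin d)) (tp tq : ℝ)
    (hp : ∀ i, p i ∈ P i) (hq : ∀ i, q i ∈ P i)
    (hpi : AffineIndependent ℝ p) (hqi : AffineIndependent ℝ q)
    (hnp : ‖np‖ = 1) (hnq : ‖nq‖ = 1)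
    (hpt : ∀ i, ⟪p i, np⟫ = tp) (hqt : ∀ i, ⟪q i, nq⟫ = tq)
    (hdp : 0 < (colMat p np 0).det) (hdq : 0 < (colMat q nq 0).det)
    (hpar : ∀ c : ℝ, nq ≠ c • np)
    (halpha : ∀ i, {y ∈ (P i : Set (EuclideanSpace ℝ (Fin d))) | tp ≤ ⟪y, np⟫}.ncard =
      {y ∈ (P i : Set (EuclideanSpace ℝ (Fin d))) | tq ≤ ⟪y, nq⟫}.ncard)
    (hRdisj : ∀ i, ({y : EuclideanSpace ℝ (Fin d) | ⟪y, np⟫ = tp} ∩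
        {y : EuclideanSpace ℝ (Fin d) | ⟪y, nq⟫ = tq}) ∩
        convexHull ℝ (P i : Set (EuclideanSpace ℝ (Fin d))) = ∅) :
    ∃ z : Fin d → EuclideanSpace ℝ (Fin d),
      (∀ i, z i ∈ convexHull ℝ (P i : Set (EuclideanSpace ℝ (Fin d)))) ∧
      (Module.finrank ℝ (affineSpan ℝ (Set.range z)).direction : ℤ) ≤ (d : ℤ) - 2 ∧
      ¬ WellSeparated P := by

  classical
  have hnp0 : np ≠ 0 := by
    intro h
    rw [h, norm_zero] at hnp
    exact one_ne_zero hnp.symm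
  have hd2 : 2 ≤ d := by
    rcases Nat.lt_or_ge d 2 with hlt | h
    swap
    · exact h
    exfalso
    interval_cases d
    · exact hnp0 (by ext i; exact i.elim0)
    · have h0 : np 0 ≠ 0 := by
        intro h
        apply hnp0
        ext i
        rw [Subsingleton.elim i (0 : Fin 1)]
        exact h
      apply hpar (nq 0 / np 0)
      ext i
      rw [Subsingleton.elim i (0 : Fin 1)]
      show nq 0 = (nq 0 / np 0) * np 0
      field_simp
  have hR : ∀ i, ∀ y ∈ convexHull ℝ (P i : Set (EuclideanSpace ℝ (Fin d))),
      ⟪y, np⟫ = tp → ⟪y, nq⟫ = tq → False := by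
    intro i y hy h1 h2
    have hmem : y ∈ (({y : EuclideanSpace ℝ (Fin d) | ⟪y, np⟫ = tp} ∩
        {y : EuclideanSpace ℝ (Fin d) | ⟪y, nq⟫ = tq}) ∩
        convexHull ℝ (P i : Set (EuclideanSpace ℝ (Fin d)))) := ⟨⟨h1, h2⟩, hy⟩
    rw [hRdisj i] at hmem
    exact hmem
  have hsel : ∀ i, ∃ mm ∈ convexHull ℝ (P i : Set (EuclideanSpace ℝ (Fin d))),
      ∀ s ∈ Icc (0:ℝ) 1, gf np nq tp tq s (p i) * gf np nq tp tq s mm ≤ 0 ∧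
        gf np nq tp tq s (p i) ≠ gf np nq tp tq s mm :=
    fun i => exists_partner np nq tp tq (P i) (p i) (q i) (hp i) (hq i) (hpt i) (hqt i)
      (halpha i) (hR i)
  choose m hm1 hm2 using hsel
  have hpc : ∀ i, p i ∈ convexHull ℝ (P i : Set (EuclideanSpace ℝ (Fin d))) :=
    fun i => subset_convexHull ℝ _ (hp i)
  have hqc : ∀ i, q i ∈ convexHull ℝ (P i : Set (EuclideanSpace ℝ (Fin d))) :=
    fun i => subset_convexHull ℝ _ (hq i)
  have hnv : ∀ s : ℝ, 0 ≤ s → s ≤ 1 → nv np nq s ≠ 0 := by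
    intro s hs0 hs1 h
    rw [nv, sub_eq_zero] at h
    rcases eq_or_lt_of_le hs0 with h0 | h0
    · apply hnp0
      rw [← h0] at h
      simpa using h
    · apply hpar (s⁻¹ * (1 - s))
      have h2 := congrArg (fun v : EuclideanSpace ℝ (Fin d) => s⁻¹ • v) h
      simp only [smul_smul, inv_mul_cancel₀ h0.ne'] at h2
      rw [one_smul] at h2
      exact h2.symm
  have hz1mem : ∀ s : ℝ, 0 ≤ s → s ≤ 1 → ∀ i,
      zpath np nq tp tq (p i) (m i) s ∈ convexHull ℝ (P i : Set (EuclideanSpace ℝ (Fin d))) :=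
    fun s hs0 hs1 i => zpath_mem np nq tp tq (convex_convexHull ℝ _) (hpc i) (hm1 i)
      ((hm2 i s ⟨hs0, hs1⟩).1) ((hm2 i s ⟨hs0, hs1⟩).2)
  have hz1plane : ∀ s : ℝ, 0 ≤ s → s ≤ 1 → ∀ i,
      ⟪zpath np nq tp tq (p i) (m i) s, nv np nq s⟫ = (1-s)*tp - s*tq := by
    intro s hs0 hs1 i
    have h0 := gf_zpath np nq tp tq (p i) (m i) s ((hm2 i s ⟨hs0, hs1⟩).2)
    rw [gf_eq_inner] at h0
    linarith
  have hz10 : (fun i => zpath np nq tp tq (p i) (m i) 0) = p := by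
    funext i
    rw [zpath, tpar]
    rw [show gf np nq tp tq 0 (p i) = 0 from by rw [gf, hpt i]; ring]
    simp
  have hnv0 : nv np nq 0 = np := by rw [nv]; simp
  have hnv1 : nv np nq 1 = -nq := by rw [nv]; simp
  have hF1cont : ContinuousOn
      (fun θ => (colMat (fun i => zpath np nq tp tq (p i) (m i) θ) (nv np nq θ) 0).det)
      (Icc 0 1) := by
    apply contOn_det
    intro i j
    by_cases hi : (i:ℕ) < d
    · by_cases hj : (j:ℕ) < d
      · simp only [colMat, Matrix.of_apply, dif_pos hi, dif_pos hj]
        have hrw : ∀ θ : ℝ, zpath np nq tp tq (p ⟨j,hj⟩) (m ⟨j,hj⟩) θ ⟨i,hi⟩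
            = p ⟨j,hj⟩ ⟨i,hi⟩ + tpar np nq tp tq (p ⟨j,hj⟩) (m ⟨j,hj⟩) θ *
              (m ⟨j,hj⟩ ⟨i,hi⟩ - p ⟨j,hj⟩ ⟨i,hi⟩) := fun θ => rfl
        simp only [hrw]
        exact continuousOn_const.add (ContinuousOn.mul
          (tpar_contOn np nq tp tq _ _ (fun s hs => (hm2 ⟨j,hj⟩ s hs).2)) continuousOn_const)
      · simp only [colMat, Matrix.of_apply, dif_pos hi, dif_neg hj]
        have hrw : ∀ θ : ℝ, nv np nq θ ⟨i,hi⟩ = (1-θ) * np ⟨i,hi⟩ - θ * nq ⟨i,hi⟩ :=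
          fun θ => rfl
        simp only [hrw]
        apply Continuous.continuousOn
        fun_prop
    · simp only [colMat, Matrix.of_apply, dif_neg hi]
      exact continuousOn_const
  have hEmem : ∀ i, zpath np nq tp tq (p i) (m i) 1 ∈
      convexHull ℝ (P i : Set (EuclideanSpace ℝ (Fin d))) :=
    hz1mem 1 zero_le_one le_rfl
  have hgfE : ∀ i, gf np nq tp tq 1 (zpath np nq tp tq (p i) (m i) 1) = 0 :=
    fun i => gf_zpath np nq tp tq (p i) (m i) 1 ((hm2 i 1 ⟨zero_le_one, le_rfl⟩).2)
  have hgfq : ∀ i, gf np nq tp tq 1 (q i) = 0 := by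
    intro i; rw [gf, hqt i]; ring
  have hz2plane : ∀ θ : ℝ, ∀ i,
      ⟪zpath np nq tp tq (p i) (m i) 1 + θ • (q i - zpath np nq tp tq (p i) (m i) 1),
        nv np nq 1⟫ = (1-(1:ℝ))*tp - 1*tq := by
    intro θ i
    have h0 : gf np nq tp tq 1 (zpath np nq tp tq (p i) (m i) 1 +
        θ • (q i - zpath np nq tp tq (p i) (m i) 1)) = 0 := by
      rw [gf_affine, hgfE i, hgfq i]; ring
    rw [gf_eq_inner] at h0
    linarith
  have hz2mem : ∀ θ : ℝ, 0 ≤ θ → θ ≤ 1 → ∀ i,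
      zpath np nq tp tq (p i) (m i) 1 + θ • (q i - zpath np nq tp tq (p i) (m i) 1) ∈
        convexHull ℝ (P i : Set (EuclideanSpace ℝ (Fin d))) :=
    fun θ h0 h1 i => seg_mem (convex_convexHull ℝ _) (hEmem i) (hqc i) ⟨h0, h1⟩
  have hz21 : (fun i => zpath np nq tp tq (p i) (m i) 1 +
      (1:ℝ) • (q i - zpath np nq tp tq (p i) (m i) 1)) = q := by
    funext i; simp
  have hz20 : (fun i => zpath np nq tp tq (p i) (m i) 1 +
      (0:ℝ) • (q i - zpath np nq tp tq (p i) (m i) 1)) =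
      (fun i => zpath np nq tp tq (p i) (m i) 1) := by
    funext i; simp
  have hF2cont : ContinuousOn
      (fun θ : ℝ => (colMat (fun i => zpath np nq tp tq (p i) (m i) 1 +
        θ • (q i - zpath np nq tp tq (p i) (m i) 1)) (nv np nq 1) 0).det)
      (Icc 0 1) := by
    apply contOn_det
    intro i j
    by_cases hi : (i:ℕ) < d
    · by_cases hj : (j:ℕ) < d
      · simp only [colMat, Matrix.of_apply, dif_pos hi, dif_pos hj]
        have hrw : ∀ θ : ℝ, (zpath np nq tp tq (p ⟨j,hj⟩) (m ⟨j,hj⟩) 1 +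
            θ • (q ⟨j,hj⟩ - zpath np nq tp tq (p ⟨j,hj⟩) (m ⟨j,hj⟩) 1)) ⟨i,hi⟩
            = zpath np nq tp tq (p ⟨j,hj⟩) (m ⟨j,hj⟩) 1 ⟨i,hi⟩ +
              θ * (q ⟨j,hj⟩ ⟨i,hi⟩ - zpath np nq tp tq (p ⟨j,hj⟩) (m ⟨j,hj⟩) 1 ⟨i,hi⟩) :=
          fun θ => rfl
        simp only [hrw]
        apply Continuous.continuousOn
        fun_prop
      · simp only [colMat, Matrix.of_apply, dif_pos hi, dif_neg hj]
        exact continuousOn_const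
    · simp only [colMat, Matrix.of_apply, dif_neg hi]
      exact continuousOn_const
  rcases le_or_gt ((colMat (fun i => zpath np nq tp tq (p i) (m i) 1) (nv np nq 1) 0).det) 0
    with hsign | hsign
  · have h0mem : (0:ℝ) ∈ Icc
        ((colMat (fun i => zpath np nq tp tq (p i) (m i) 1) (nv np nq 1) 0).det)
        ((colMat (fun i => zpath np nq tp tq (p i) (m i) 0) (nv np nq 0) 0).det) := by
      constructor
      · exact hsign
      · rw [hz10, hnv0]
        exact hdp.le
    obtain ⟨θ, hθmem, hθ0⟩ := intermediate_value_Icc' zero_le_one hF1cont h0mem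
    exact ⟨fun i => zpath np nq tp tq (p i) (m i) θ,
      conclude hd2 P _ (fun i => hz1mem θ hθmem.1 hθmem.2 i)
        (key_dep _ (nv np nq θ) ((1-θ)*tp - θ*tq) (hnv θ hθmem.1 hθmem.2)
          (fun i => hz1plane θ hθmem.1 hθmem.2 i) hθ0)⟩
  · have h0mem : (0:ℝ) ∈ Icc
        ((colMat (fun i => zpath np nq tp tq (p i) (m i) 1 +
          (1:ℝ) • (q i - zpath np nq tp tq (p i) (m i) 1)) (nv np nq 1) 0).det)
        ((colMat (fun i => zpath np nq tp tq (p i) (m i) 1 +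
          (0:ℝ) • (q i - zpath np nq tp tq (p i) (m i) 1)) (nv np nq 1) 0).det) := by
      constructor
      · rw [hz21, hnv1, det_colMat_neg]
        linarith
      · rw [hz20]
        exact hsign.le
    obtain ⟨θ, hθmem, hθ0⟩ := intermediate_value_Icc' zero_le_one hF2cont h0mem
    exact ⟨fun i => zpath np nq tp tq (p i) (m i) 1 +
        θ • (q i - zpath np nq tp tq (p i) (m i) 1),
      conclude hd2 P _ (fun i => hz2mem θ hθmem.1 hθmem.2 i)
        (key_dep _ (nv np nq 1) ((1-(1:ℝ))*tp - 1*tq) (hnv 1 zero_le_one le_rfl)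
          (fun i => hz2plane θ i) hθ0)⟩
end

section
/- Let P be a finite point set in R^d and let H be a hyperplane obtained by rotating a hyperplane H_1 about a (d−2)-flat R (spanned by points of P), where the rotation does not pass through any point of P. Let P_j ⊆ P be a subset (the missing color) disjoint from H_1 and from every intermediate hyperplane of the rotation, and let x, y ∈ P_j be points with x ∈ H_1^+ and y ∈ H_1^−, such that the segment xy does not meet R. Then x ∈ H^+ and y ∈ H^−, where the orientation of each intermediate hyperplane is defined via R and the intersection of that hyperplane with segment xy. -/
open Set
open scoped RealInnerProductSpace

theorem orientation_consistent_along_rotation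
    {d : ℕ} (P Pj : Finset (EuclideanSpace ℝ (Fin d))) (hPj : Pj ⊆ P)
    (R : AffineSubspace ℝ (EuclideanSpace ℝ (Fin d)))
    (hRdim : Module.finrank ℝ R.direction = d - 2)
    (n : ℝ → EuclideanSpace ℝ (Fin d)) (t : ℝ → ℝ)
    (hn : ContinuousOn n (Set.Icc 0 1)) (ht : ContinuousOn t (Set.Icc 0 1))
    (hn0 : ∀ θ ∈ Set.Icc (0 : ℝ) 1, n θ ≠ 0)
    (hR : ∀ θ ∈ Set.Icc (0 : ℝ) 1, ∀ w ∈ (R : Set (EuclideanSpace ℝ (Fin d))),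
      ⟪w, n θ⟫ = t θ)
    (hmiss : ∀ θ ∈ Set.Icc (0 : ℝ) 1, ∀ p ∈ Pj, ⟪p, n θ⟫ ≠ t θ)
    (x y : EuclideanSpace ℝ (Fin d)) (hx : x ∈ Pj) (hy : y ∈ Pj)
    (hxy : ∀ w ∈ segment ℝ x y, w ∉ (R : Set (EuclideanSpace ℝ (Fin d))))
    (hx0 : t 0 < ⟪x, n 0⟫) (hy0 : ⟪y, n 0⟫ < t 0) :
    t 1 < ⟪x, n 1⟫ ∧ ⟪y, n 1⟫ < t 1 := by
  have key : ∀ p ∈ Pj, 0 < ⟪p, n 0⟫ - t 0 → 0 < ⟪p, n 1⟫ - t 1 := by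
    intro p hp h0
    have hf : ContinuousOn (fun θ => ⟪p, n θ⟫ - t θ) (Set.Icc 0 1) := by
      apply ContinuousOn.sub _ ht
      exact (continuous_const.inner continuous_id).comp_continuousOn hn
    by_contra hc
    push_neg at hc
    have h1 : ⟪p, n 1⟫ - t 1 < 0 :=
      lt_of_le_of_ne hc (fun h => hmiss 1 (by norm_num) p hp (by linarith))
    obtain ⟨c, hc1, hc2⟩ := intermediate_value_Icc' (by norm_num : (0:ℝ) ≤ 1) hf
      (Set.mem_Icc.mpr ⟨le_of_lt h1, le_of_lt h0⟩)
    exact hmiss c hc1 p hp (sub_eq_zero.mp hc2)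
  have keyy : ∀ p ∈ Pj, ⟪p, n 0⟫ - t 0 < 0 → ⟪p, n 1⟫ - t 1 < 0 := by
    intro p hp h0
    have hf : ContinuousOn (fun θ => ⟪p, n θ⟫ - t θ) (Set.Icc 0 1) := by
      apply ContinuousOn.sub _ ht
      exact (continuous_const.inner continuous_id).comp_continuousOn hn
    by_contra hc
    push_neg at hc
    have h1 : 0 < ⟪p, n 1⟫ - t 1 :=
      lt_of_le_of_ne hc (fun h => hmiss 1 (by norm_num) p hp (by linarith))
    obtain ⟨c, hc1, hc2⟩ := intermediate_value_Icc (by norm_num : (0:ℝ) ≤ 1) hf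
      (Set.mem_Icc.mpr ⟨le_of_lt h0, le_of_lt h1⟩)
    exact hmiss c hc1 p hp (sub_eq_zero.mp hc2)
  constructor
  · have := key x hx (by linarith); linarith
  · have := keyy y hy (by linarith); linarith
end
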